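/- arXiv:1612.09181 — 5 statements merged into one kernel-verified Lean document; each statement's English description precedes it below -/
import Mathlib

section
/- With uniform monomer activity x and nonnegative dimer activities w_{ij}, the partition function Z_G(x) = Σ_D (Π_{ij∈D} w_{ij}) x^{N−2|D|} is a monic polynomial of degree N = |V| in x whose complex zeros are all purely imaginary. -/
open scoped BigOperators
open MeasureTheory Filter Finset

attribute [local instance] Classical.propDecidable

noncomputable section

variable {V : Type*} [Fintype V] [DecidableEq V]

/-- `D` is a monomer-dimer configuration (matching) within the edge set `E`. -/
def IsMatchingIn (E D : Finset (Sym2 V)) : Prop :=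
  D ⊆ E ∧ (∀ e ∈ D, ¬ e.IsDiag) ∧
    ∀ e ∈ D, ∀ f ∈ D, e ≠ f → ∀ v : V, ¬(v ∈ e ∧ v ∈ f)

/-- All matchings of the edge set `E`. -/
def matchingsIn (E : Finset (Sym2 V)) : Finset (Finset (Sym2 V)) :=
  E.powerset.filter (fun D => IsMatchingIn E D)

/-- `M(D)`: the set of vertices not covered by the matching `D` (the monomers). -/
def uncovered (D : Finset (Sym2 V)) : Finset V :=
  Finset.univ.filter (fun v => ∀ e ∈ D, v ∉ e)

/-- `x_i * x_j` for the edge `e = {i,j}`. -/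
def edgeProd (x : V → ℝ) : Sym2 V → ℝ :=
  Sym2.lift ⟨fun a b => x a * x b, fun a b => mul_comm _ _⟩

/-- The monomer-dimer partition function with dimer activities `w` and monomer
activities `x` on the graph with edge set `E`. -/
def partFun (E : Finset (Sym2 V)) (w : Sym2 V → ℝ) (x : V → ℝ) : ℝ :=
  ∑ D ∈ matchingsIn E, (∏ e ∈ D, w e) * ∏ i ∈ uncovered D, x i

/-- The edge set of the complete graph on `V`. -/
def completeEdges (V : Type*) [Fintype V] [DecidableEq V] : Finset (Sym2 V) :=
  Finset.univ.filter (fun e : Sym2 V => ¬ e.IsDiag)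

/-- The matching polynomial `Z_G(x) = Σ_D (Π_{ij∈D} w_{ij}) x^{N−2|D|}` with
complex variable `x`. -/
def matchPoly (E : Finset (Sym2 V)) (w : Sym2 V → ℝ) : Polynomial ℂ :=
  ∑ D ∈ matchingsIn E,
    Polynomial.C (∏ e ∈ D, (w e : ℂ)) * Polynomial.X ^ (Fintype.card V - 2 * D.card)

namespace HL

def everts (e : Sym2 V) : Finset V := Finset.univ.filter (· ∈ e)

@[simp] lemma mem_everts {v : V} {e : Sym2 V} : v ∈ everts e ↔ v ∈ e := by
  simp [everts]

lemma everts_card {e : Sym2 V} (h : ¬ e.IsDiag) : (everts e).card = 2 := by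
  induction e using Sym2.ind with
  | _ a b =>
    have hab : a ≠ b := by simpa [Sym2.isDiag_iff_proj_eq] using h
    have : everts (s(a,b)) = {a, b} := by
      ext v; simp [Sym2.mem_iff]
    rw [this, Finset.card_insert_of_notMem (by simpa using hab), Finset.card_singleton]

def mverts (D : Finset (Sym2 V)) : Finset V := D.biUnion everts

lemma mverts_card {E D : Finset (Sym2 V)} (hD : IsMatchingIn E D) :
    (mverts D).card = 2 * D.card := by
  rw [mverts, Finset.card_biUnion]
  · rw [Finset.sum_congr rfl (fun e he => everts_card (hD.2.1 e he)), Finset.sum_const,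
      smul_eq_mul, mul_comm]
  · intro e he f hf hef
    simp only [Finset.disjoint_left, mem_everts]
    intro v hv hv'
    exact hD.2.2 e he f hf hef v ⟨hv, hv'⟩

def mIn (E : Finset (Sym2 V)) (S : Finset V) : Finset (Finset (Sym2 V)) :=
  (matchingsIn E).filter (fun D => mverts D ⊆ S)

lemma mem_mIn {E : Finset (Sym2 V)} {S : Finset V} {D : Finset (Sym2 V)} :
    D ∈ mIn E S ↔ IsMatchingIn E D ∧ mverts D ⊆ S := by
  simp only [mIn, Finset.mem_filter, matchingsIn, Finset.mem_powerset]
  constructor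
  · rintro ⟨⟨_, h⟩, h2⟩; exact ⟨h, h2⟩
  · rintro ⟨h, h2⟩; exact ⟨⟨h.1, h⟩, h2⟩

lemma card_le_of_mem_mIn {E : Finset (Sym2 V)} {S : Finset V} {D : Finset (Sym2 V)}
    (h : D ∈ mIn E S) : 2 * D.card ≤ S.card := by
  rw [← mverts_card (mem_mIn.1 h).1]
  exact Finset.card_le_card (mem_mIn.1 h).2

def Zf (E : Finset (Sym2 V)) (w : Sym2 V → ℝ) (S : Finset V) (z : ℂ) : ℂ :=
  ∑ D ∈ mIn E S, (∏ e ∈ D, (w e : ℂ)) * z ^ (S.card - 2 * D.card)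

set_option linter.unusedSectionVars false in
lemma matching_subset {E D D' : Finset (Sym2 V)} (h : IsMatchingIn E D)
    (h' : D' ⊆ D) : IsMatchingIn E D' :=
  ⟨h'.trans h.1, fun e he => h.2.1 e (h' he),
    fun e he f hf hef => h.2.2 e (h' he) f (h' hf) hef⟩

lemma empty_mem_mIn {E : Finset (Sym2 V)} {S : Finset V} : ∅ ∈ mIn E S :=
  mem_mIn.2 ⟨⟨Finset.empty_subset _, by simp, by simp⟩, by simp [mverts]⟩

lemma Zf_empty (E : Finset (Sym2 V)) (w : Sym2 V → ℝ) (z : ℂ) : Zf E w ∅ z = 1 := by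
  have h : mIn E (∅ : Finset V) = {∅} := by
    ext D
    simp only [mem_mIn, Finset.mem_singleton]
    constructor
    · rintro ⟨hD, hsub⟩
      by_contra hne
      obtain ⟨e, he⟩ := Finset.nonempty_iff_ne_empty.2 hne
      have hcard : (everts e).card = 2 := everts_card (hD.2.1 e he)
      obtain ⟨x, hx⟩ := Finset.card_pos.mp (by omega : 0 < (everts e).card)
      exact absurd (hsub (Finset.mem_biUnion.2 ⟨e, he, hx⟩)) (by simp)
    · rintro rfl
      exact mem_mIn.1 empty_mem_mIn
  rw [Zf, h]
  simp

lemma Zf_rec (E : Finset (Sym2 V)) (hE : ∀ e ∈ E, ¬ e.IsDiag) (w : Sym2 V → ℝ)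
    (S : Finset V) (v : V) (hv : v ∈ S) (z : ℂ) :
    Zf E w S z = z * Zf E w (S.erase v) z +
      ∑ e ∈ E.filter (fun e => v ∈ e ∧ everts e ⊆ S),
        (w e : ℂ) * Zf E w (S \ everts e) z := by
  classical
  have hcardS : (S.erase v).card + 1 = S.card := Finset.card_erase_add_one hv
  rw [Zf, ← Finset.sum_filter_add_sum_filter_not (mIn E S) (fun D => v ∈ mverts D)]
  rw [add_comm]
  congr 1
  · -- matchings avoiding v
    have hset : (mIn E S).filter (fun D => ¬ v ∈ mverts D) = mIn E (S.erase v) := by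
      ext D
      simp only [Finset.mem_filter, mem_mIn, Finset.subset_erase]
      tauto
    rw [hset, Zf, Finset.mul_sum]
    refine Finset.sum_congr rfl (fun D hD => ?_)
    have h2 : 2 * D.card ≤ (S.erase v).card := card_le_of_mem_mIn hD
    have hexp : S.card - 2 * D.card = ((S.erase v).card - 2 * D.card) + 1 := by omega
    rw [hexp, pow_succ]
    ring
  · -- matchings covering v
    set T := E.filter (fun e => v ∈ e ∧ everts e ⊆ S) with hT
    -- basic facts about inserting an edge of T
    have hkey : ∀ e ∈ T, ∀ D' ∈ mIn E (S \ everts e),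
        e ∉ D' ∧ insert e D' ∈ mIn E S ∧ v ∈ mverts (insert e D') := by
      intro e heT D' hD'
      obtain ⟨heE, hve, hes⟩ : e ∈ E ∧ v ∈ e ∧ everts e ⊆ S := by
        simpa [hT] using heT
      obtain ⟨hD'm, hD'v⟩ := mem_mIn.1 hD'
      have heD' : e ∉ D' := by
        intro h
        have : v ∈ mverts D' := Finset.mem_biUnion.2 ⟨e, h, by simpa using hve⟩
        have := hD'v this
        simp only [Finset.mem_sdiff, mem_everts] at this
        exact this.2 hve
      have hdisj : ∀ f ∈ D', ∀ u : V, ¬(u ∈ e ∧ u ∈ f) := by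
        intro f hf u ⟨hu1, hu2⟩
        have : u ∈ mverts D' := Finset.mem_biUnion.2 ⟨f, hf, by simpa using hu2⟩
        have := hD'v this
        simp only [Finset.mem_sdiff, mem_everts] at this
        exact this.2 hu1
      refine ⟨heD', mem_mIn.2 ⟨⟨?_, ?_, ?_⟩, ?_⟩, ?_⟩
      · exact Finset.insert_subset heE (hD'm.1)
      · intro f hf
        rcases Finset.mem_insert.1 hf with rfl | hf
        · exact hE f heE
        · exact hD'm.2.1 f hf
      · intro f hf g hg hfg u hu
        rcases Finset.mem_insert.1 hf with hfe | hf' <;>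
          rcases Finset.mem_insert.1 hg with hge | hg'
        · exact hfg (hfe.trans hge.symm)
        · exact hdisj g hg' u ⟨hfe ▸ hu.1, hu.2⟩
        · exact hdisj f hf' u ⟨hge ▸ hu.2, hu.1⟩
        · exact hD'm.2.2 f hf' g hg' hfg u hu
      · rw [mverts, Finset.biUnion_insert]
        exact Finset.union_subset hes ((hD'v).trans (Finset.sdiff_subset))
      · exact Finset.mem_biUnion.2 ⟨e, Finset.mem_insert_self _ _, by simpa using hve⟩
    have hset : (mIn E S).filter (fun D => v ∈ mverts D) =
        T.biUnion (fun e => (mIn E (S \ everts e)).image (insert e)) := by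
      ext D
      simp only [Finset.mem_filter, Finset.mem_biUnion, Finset.mem_image]
      constructor
      · rintro ⟨hD, hvD⟩
        obtain ⟨hDm, hDS⟩ := mem_mIn.1 hD
        obtain ⟨e, heD, hve⟩ := Finset.mem_biUnion.1 hvD
        rw [mem_everts] at hve
        have heT : e ∈ T := by
          rw [hT, Finset.mem_filter]
          exact ⟨hDm.1 heD, hve, fun u hu =>
            hDS (Finset.mem_biUnion.2 ⟨e, heD, hu⟩)⟩
        refine ⟨e, heT, D.erase e, ?_, Finset.insert_erase heD⟩
        refine mem_mIn.2 ⟨matching_subset hDm (Finset.erase_subset _ _), ?_⟩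
        intro u hu
        obtain ⟨f, hf, huf⟩ := Finset.mem_biUnion.1 hu
        have hfD : f ∈ D := Finset.mem_of_mem_erase hf
        have hfe : f ≠ e := Finset.ne_of_mem_erase hf
        refine Finset.mem_sdiff.2 ⟨hDS (Finset.mem_biUnion.2 ⟨f, hfD, huf⟩), ?_⟩
        rw [mem_everts] at huf ⊢
        intro hue
        exact hDm.2.2 f hfD e heD hfe u ⟨huf, hue⟩
      · rintro ⟨e, heT, D', hD', rfl⟩
        obtain ⟨_, h1, h2⟩ := hkey e heT D' hD'
        exact ⟨h1, h2⟩
    rw [hset]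
    rw [Finset.sum_biUnion ?hdisj]
    case hdisj =>
      intro e1 he1 e2 he2 hne
      simp only [Finset.disjoint_left, Finset.mem_image]
      rintro D ⟨D1, hD1, rfl⟩ ⟨D2, hD2, hD2eq⟩
      obtain ⟨_, hDm1, _⟩ := hkey e1 he1 D1 hD1
      have hv1 : v ∈ e1 := by
        have := (Finset.mem_filter.1 he1).2.1; exact this
      have hv2 : v ∈ e2 := (Finset.mem_filter.1 he2).2.1
      have he1m : e1 ∈ insert e1 D1 := Finset.mem_insert_self _ _
      have he2m : e2 ∈ insert e1 D1 := by
        rw [← hD2eq]; exact Finset.mem_insert_self _ _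
      exact (mem_mIn.1 hDm1).1.2.2 e1 he1m e2 he2m hne v ⟨hv1, hv2⟩
    refine Finset.sum_congr rfl (fun e heT => ?_)
    obtain ⟨heE, hve, hes⟩ : e ∈ E ∧ v ∈ e ∧ everts e ⊆ S := by
      simpa [hT] using heT
    rw [Finset.sum_image (fun D1 h1 D2 h2 hins => ?_)]
    swap
    · -- injectivity of insert e
      have h1' := (hkey e heT D1 h1).1
      have h2' := (hkey e heT D2 h2).1
      rw [← Finset.erase_insert h1', ← Finset.erase_insert h2', hins]
    rw [Zf, Finset.mul_sum]
    refine Finset.sum_congr rfl (fun D' hD' => ?_)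
    have heD' := (hkey e heT D' hD').1
    have hecard : (everts e).card = 2 := everts_card (hE e heE)
    have hScard : (S \ everts e).card = S.card - 2 := by
      rw [Finset.card_sdiff_of_subset hes, hecard]
    have h2 : 2 * D'.card ≤ (S \ everts e).card := card_le_of_mem_mIn hD'
    have h2S : 2 ≤ S.card := by
      calc 2 = (everts e).card := hecard.symm
      _ ≤ S.card := Finset.card_le_card hes
    have hexp : S.card - 2 * (insert e D').card = (S \ everts e).card - 2 * D'.card := by
      rw [Finset.card_insert_of_notMem heD', hScard]; omega
    rw [Finset.prod_insert heD', hexp]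
    ring

lemma Zf_good (E : Finset (Sym2 V)) (hE : ∀ e ∈ E, ¬ e.IsDiag) (w : Sym2 V → ℝ)
    (hw : ∀ e ∈ E, 0 ≤ w e) {z : ℂ} (hz : 0 < z.re) (S : Finset V) :
    Zf E w S z ≠ 0 ∧ ∀ v ∈ S, 0 < (Zf E w S z / Zf E w (S.erase v) z).re := by
  induction S using Finset.strongInduction with
  | _ S IH =>
  have hrat : ∀ v ∈ S, 0 < (Zf E w S z / Zf E w (S.erase v) z).re := by
    intro v hv
    have hS'ss : S.erase v ⊂ S := Finset.erase_ssubset hv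
    have hS' : Zf E w (S.erase v) z ≠ 0 := (IH _ hS'ss).1
    rw [Zf_rec E hE w S v hv z, add_div, mul_div_assoc, div_self hS', mul_one,
      Finset.sum_div]
    rw [Complex.add_re, Complex.re_sum]
    have hterm : ∀ e ∈ E.filter (fun e => v ∈ e ∧ everts e ⊆ S),
        0 ≤ ((w e : ℂ) * Zf E w (S \ everts e) z / Zf E w (S.erase v) z).re := by
      intro e he
      obtain ⟨heE, hve, hes⟩ : e ∈ E ∧ v ∈ e ∧ everts e ⊆ S := by
        simpa using he
      obtain ⟨u, rfl⟩ := Sym2.mem_iff_exists.1 hve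
      have huv : u ≠ v := by
        intro h; subst h
        exact hE _ heE (Sym2.isDiag_iff_proj_eq |>.2 rfl)
      have heverts : everts (s(v, u)) = {v, u} := by
        ext x; simp [Sym2.mem_iff]
      have hsd : S \ everts (s(v, u)) = (S.erase v).erase u := by
        rw [heverts]; ext x
        simp only [Finset.mem_sdiff, Finset.mem_insert, Finset.mem_singleton,
          Finset.mem_erase]
        tauto
      have huS' : u ∈ S.erase v := by
        refine Finset.mem_erase.2 ⟨huv, hes ?_⟩
        rw [heverts]; simp
      have hSuss : (S.erase v).erase u ⊂ S :=
        (Finset.erase_subset _ _).trans_ssubset (Finset.erase_ssubset hv)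
      have hZu : Zf E w ((S.erase v).erase u) z ≠ 0 := (IH _ hSuss).1
      have hρ : 0 < (Zf E w (S.erase v) z / Zf E w ((S.erase v).erase u) z).re :=
        (IH _ (Finset.erase_ssubset hv)).2 u huS'
      have hρne : Zf E w (S.erase v) z / Zf E w ((S.erase v).erase u) z ≠ 0 := by
        intro h; rw [h] at hρ; simp at hρ
      have hinv : 0 < (Zf E w ((S.erase v).erase u) z / Zf E w (S.erase v) z).re := by
        rw [← inv_div]
        rw [Complex.inv_re]
        exact div_pos hρ (Complex.normSq_pos.2 hρne)
      rw [hsd, mul_div_assoc, Complex.re_ofReal_mul]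
      exact mul_nonneg (hw _ heE) hinv.le
    have hsum : 0 ≤ ∑ e ∈ E.filter (fun e => v ∈ e ∧ everts e ⊆ S),
        ((w e : ℂ) * Zf E w (S \ everts e) z / Zf E w (S.erase v) z).re :=
      Finset.sum_nonneg hterm
    linarith
  refine ⟨?_, hrat⟩
  rcases Finset.eq_empty_or_nonempty S with rfl | ⟨v, hv⟩
  · rw [Zf_empty]; exact one_ne_zero
  · intro h0
    have := hrat v hv
    rw [h0, zero_div] at this
    simp at this

lemma Zf_neg (E : Finset (Sym2 V)) (w : Sym2 V → ℝ) (S : Finset V) (z : ℂ) :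
    Zf E w S (-z) = (-1) ^ S.card * Zf E w S z := by
  rw [Zf, Zf, Finset.mul_sum]
  refine Finset.sum_congr rfl (fun D hD => ?_)
  have h2 : 2 * D.card ≤ S.card := card_le_of_mem_mIn hD
  have hpow : (-1 : ℂ) ^ (S.card - 2 * D.card) = (-1) ^ S.card := by
    have : (-1 : ℂ) ^ (S.card - 2 * D.card) * (-1) ^ (2 * D.card) = (-1) ^ S.card := by
      rw [← pow_add]; congr 1; omega
    have h1 : (-1 : ℂ) ^ (2 * D.card) = 1 := by
      rw [pow_mul]; norm_num
    rw [h1, mul_one] at this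
    exact this
  rw [neg_pow z, hpow]
  ring

lemma matchPoly_eval (E : Finset (Sym2 V)) (w : Sym2 V → ℝ) (z : ℂ) :
    (matchPoly E w).eval z = Zf E w Finset.univ z := by
  rw [matchPoly, Zf]
  have h : mIn E Finset.univ = matchingsIn E := by
    rw [mIn, Finset.filter_true_of_mem fun _ _ => Finset.subset_univ _]
  rw [h, Polynomial.eval_finset_sum]
  refine Finset.sum_congr rfl (fun D hD => ?_)
  rw [Polynomial.eval_mul, Polynomial.eval_C, Polynomial.eval_pow, Polynomial.eval_X,
    Finset.card_univ]

end HL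

/-- with uniform monomer activity `x` and nonnegative dimer weights,
`Z_G` is a monic polynomial of degree `N = |V|` in `x` whose complex zeros are
purely imaginary. -/
theorem matchPoly_monic_degree_zeros_imaginary (E : Finset (Sym2 V))
    (hE : ∀ e ∈ E, ¬ e.IsDiag) (w : Sym2 V → ℝ) (hw : ∀ e ∈ E, 0 ≤ w e) :
    (matchPoly E w).Monic ∧ (matchPoly E w).natDegree = Fintype.card V ∧
      ∀ z : ℂ, (matchPoly E w).eval z = 0 → z.re = 0 := by
  set N := Fintype.card V with hN
  have hmIn : matchingsIn E = HL.mIn E (Finset.univ : Finset V) := by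
    rw [HL.mIn, Finset.filter_true_of_mem fun _ _ => Finset.subset_univ _]
  have h0 : (∅ : Finset (Sym2 V)) ∈ matchingsIn E := by
    rw [hmIn]; exact HL.empty_mem_mIn
  have hsplit : matchPoly E w = Polynomial.X ^ N +
      ∑ D ∈ (matchingsIn E).erase ∅,
        Polynomial.C (∏ e ∈ D, (w e : ℂ)) * Polynomial.X ^ (N - 2 * D.card) := by
    rw [matchPoly, ← Finset.add_sum_erase _ _ h0]
    simp [hN]
  have hq : (∑ D ∈ (matchingsIn E).erase ∅,
      Polynomial.C (∏ e ∈ D, (w e : ℂ)) * Polynomial.X ^ (N - 2 * D.card)).degree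
      < (N : WithBot ℕ) := by
    refine lt_of_le_of_lt (Polynomial.degree_sum_le _ _) ?_
    refine (Finset.sup_lt_iff (WithBot.bot_lt_coe N)).2 (fun D hD => ?_)
    have hDne : D ≠ ∅ := Finset.ne_of_mem_erase hD
    have hDm : D ∈ matchingsIn E := Finset.mem_of_mem_erase hD
    have h2 : 2 * D.card ≤ N := by
      have := HL.card_le_of_mem_mIn (hmIn ▸ hDm)
      rwa [Finset.card_univ] at this
    have h1 : 1 ≤ D.card := Finset.card_pos.2 (Finset.nonempty_iff_ne_empty.2 hDne)
    refine lt_of_le_of_lt (Polynomial.degree_C_mul_X_pow_le _ _) ?_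
    exact Nat.cast_lt.2 (Nat.sub_lt (by omega) (by omega))
  have hdeg : (matchPoly E w).degree = (N : WithBot ℕ) := by
    rw [hsplit, Polynomial.degree_add_eq_left_of_degree_lt
      (by rwa [Polynomial.degree_X_pow]), Polynomial.degree_X_pow]
  refine ⟨?_, ?_, ?_⟩
  · rw [hsplit]
    exact Polynomial.monic_X_pow_add hq
  · exact Polynomial.natDegree_eq_of_degree_eq_some hdeg
  · intro z hz
    by_contra hre
    rcases lt_or_gt_of_ne hre with hlt | hgt
    · -- z.re < 0, use -z
      have hpos : 0 < (-z).re := by simpa using hlt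
      refine (HL.Zf_good E hE w hw hpos Finset.univ).1 ?_
      rw [HL.Zf_neg, Finset.card_univ, ← HL.matchPoly_eval, hz, mul_zero]
    · have := (HL.Zf_good E hE w hw hgt Finset.univ).1
      rw [← HL.matchPoly_eval E w z] at this
      exact this hz
end
end

section
/- Interlacing of zeros: with uniform monomer activity x and strictly positive dimer weights w_{ij} > 0 on the complete graph with N vertices, writing the zeros of Z_G as −i·a_1, …, −i·a_N and the zeros of Z_{G−v} (for any fixed vertex v) as −i·a'_1, …, −i·a'_{N−1} with a_k, a'_k real, the zeros strictly interlace: a_1 < a'_1 < a_2 < a'_2 < ⋯ < a'_{N−1} < a_N. -/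
open scoped BigOperators
open MeasureTheory Filter Finset

attribute [local instance] Classical.propDecidable

noncomputable section

variable {V : Type*} [Fintype V] [DecidableEq V]

/-- Matching polynomial of the induced subgraph of the complete graph on the
vertex subset `S`, with dimer weights `w` and complex monomer variable. -/
def matchPolyS (S : Finset V) (w : Sym2 V → ℝ) : Polynomial ℂ :=
  ∑ D ∈ matchingsIn ((completeEdges V).filter (fun e => ∀ v ∈ e, v ∈ S)),
    Polynomial.C (∏ e ∈ D, (w e : ℂ)) * Polynomial.X ^ (S.card - 2 * D.card)

/-! ### auxiliary development -/

def edgesOf (S : Finset V) : Finset (Sym2 V) :=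
  (completeEdges V).filter (fun e => ∀ x ∈ e, x ∈ S)

lemma mem_matchingsIn {E D : Finset (Sym2 V)} :
    D ∈ matchingsIn E ↔ IsMatchingIn E D := by
  simp only [matchingsIn, Finset.mem_filter, Finset.mem_powerset]
  exact ⟨fun h => h.2, fun h => ⟨h.1, h⟩⟩

lemma mem_edgesOf {S : Finset V} {e : Sym2 V} :
    e ∈ edgesOf S ↔ ¬ e.IsDiag ∧ ∀ x ∈ e, x ∈ S := by
  simp [edgesOf, completeEdges]

open Polynomial in
/-- The real matching polynomial with sign `(-1)^{|D|}`. -/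
def mq (w : Sym2 V → ℝ) (S : Finset V) : Polynomial ℝ :=
  ∑ D ∈ matchingsIn (edgesOf S),
    C ((-1) ^ D.card * ∏ e ∈ D, w e) * X ^ (S.card - 2 * D.card)

lemma card_matching_le {S : Finset V} {D : Finset (Sym2 V)}
    (hD : D ∈ matchingsIn (edgesOf S)) : 2 * D.card ≤ S.card := by
  rw [mem_matchingsIn] at hD
  obtain ⟨hsub, hdiag, hdisj⟩ := hD
  set f : Sym2 V → Finset V := fun e => Finset.univ.filter (· ∈ e) with hf
  have hcard2 : ∀ e ∈ D, (f e).card = 2 := by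
    intro e he
    induction e using Sym2.ind with
    | _ x y =>
      have hxy : x ≠ y := by
        intro h; exact hdiag _ he (by simp [h, Sym2.mk_isDiag_iff])
      have : f s(x, y) = {x, y} := by
        ext z; simp [hf, Sym2.mem_iff]
      rw [this, Finset.card_insert_of_notMem (by simp [hxy]), Finset.card_singleton]
  have hdisj' : ∀ e ∈ D, ∀ g ∈ D, e ≠ g → Disjoint (f e) (f g) := by
    intro e he g hg hne
    rw [Finset.disjoint_left]
    intro z hz hz'
    simp only [hf, Finset.mem_filter] at hz hz'
    exact hdisj e he g hg hne z ⟨hz.2, hz'.2⟩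
  have hsubS : D.biUnion f ⊆ S := by
    intro z hz
    simp only [Finset.mem_biUnion, hf, Finset.mem_filter] at hz
    obtain ⟨e, he, _, hze⟩ := hz
    exact ((mem_edgesOf.1 (hsub he)).2 z hze)
  calc 2 * D.card = ∑ e ∈ D, (f e).card := by
        rw [Finset.sum_congr rfl hcard2]; simp [mul_comm]
    _ = (D.biUnion f).card := (Finset.card_biUnion hdisj').symm
    _ ≤ S.card := Finset.card_le_card hsubS

lemma empty_mem_matchingsIn (E : Finset (Sym2 V)) : ∅ ∈ matchingsIn E := by
  rw [mem_matchingsIn]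
  refine ⟨Finset.empty_subset _, by simp, by simp⟩

open Polynomial in
lemma mq_monic (w : Sym2 V → ℝ) (S : Finset V) : (mq w S).Monic := by
  have h := empty_mem_matchingsIn (V := V) (edgesOf S)
  rw [mq, ← Finset.add_sum_erase _ _ h]
  simp only [Finset.card_empty, pow_zero, Finset.prod_empty, mul_one, map_one, one_mul,
    Nat.mul_zero, Nat.sub_zero]
  apply monic_X_pow_add
  apply lt_of_le_of_lt (Polynomial.degree_sum_le _ _)
  rw [Finset.sup_lt_iff (by exact WithBot.bot_lt_coe _)]
  intro D hD
  rw [Finset.mem_erase] at hD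
  have h2 : 2 * D.card ≤ S.card := card_matching_le hD.2
  have hD1 : 1 ≤ D.card := Finset.card_pos.2 (Finset.nonempty_iff_ne_empty.2 hD.1)
  calc degree (C ((-1) ^ D.card * ∏ e ∈ D, w e) * X ^ (S.card - 2 * D.card))
      ≤ degree (C ((-1) ^ D.card * ∏ e ∈ D, w e)) + degree ((X : ℝ[X]) ^ (S.card - 2 * D.card)) :=
        degree_mul_le _ _
    _ ≤ 0 + (S.card - 2 * D.card : ℕ) := by
        exact add_le_add degree_C_le (by rw [degree_X_pow])
    _ < (S.card : WithBot ℕ) := by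
        rw [zero_add, Nat.cast_lt]
        omega

open Polynomial in
lemma mq_natDegree (w : Sym2 V → ℝ) (S : Finset V) : (mq w S).natDegree = S.card := by
  have h := empty_mem_matchingsIn (V := V) (edgesOf S)
  rw [mq, ← Finset.add_sum_erase _ _ h]
  simp only [Finset.card_empty, pow_zero, Finset.prod_empty, mul_one, map_one, one_mul,
    Nat.mul_zero, Nat.sub_zero]
  have hdeg : degree (∑ D ∈ (matchingsIn (edgesOf S)).erase ∅,
      C ((-1) ^ D.card * ∏ e ∈ D, w e) * X ^ (S.card - 2 * D.card)) < (S.card : WithBot ℕ) := by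
    apply lt_of_le_of_lt (Polynomial.degree_sum_le _ _)
    rw [Finset.sup_lt_iff (by exact WithBot.bot_lt_coe _)]
    intro D hD
    rw [Finset.mem_erase] at hD
    have h2 : 2 * D.card ≤ S.card := card_matching_le hD.2
    have hD1 : 1 ≤ D.card := Finset.card_pos.2 (Finset.nonempty_iff_ne_empty.2 hD.1)
    calc degree (C ((-1) ^ D.card * ∏ e ∈ D, w e) * X ^ (S.card - 2 * D.card))
        ≤ degree (C ((-1) ^ D.card * ∏ e ∈ D, w e)) + degree ((X : ℝ[X]) ^ (S.card - 2 * D.card)) :=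
          degree_mul_le _ _
      _ ≤ 0 + (S.card - 2 * D.card : ℕ) := add_le_add degree_C_le (by rw [degree_X_pow])
      _ < (S.card : WithBot ℕ) := by rw [zero_add, Nat.cast_lt]; omega
  refine natDegree_eq_of_degree_eq_some ?_
  rw [Polynomial.degree_add_eq_left_of_degree_lt (by rwa [degree_X_pow]), degree_X_pow]

open Polynomial in
lemma mq_of_no_edges (w : Sym2 V → ℝ) {S : Finset V} (h : edgesOf S = ∅) :
    mq w S = X ^ S.card := by
  have hm : matchingsIn (∅ : Finset (Sym2 V)) = {∅} := by
    ext D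
    simp only [mem_matchingsIn, IsMatchingIn, Finset.subset_empty, Finset.mem_singleton]
    constructor
    · rintro ⟨h1, -, -⟩; exact h1
    · rintro rfl; exact ⟨rfl, by simp, by simp⟩
  rw [mq, h, hm]
  simp

lemma edgesOf_card_le_one (w : Sym2 V → ℝ) {S : Finset V} (h : S.card ≤ 1) :
    edgesOf S = ∅ := by
  ext e
  simp only [mem_edgesOf, Finset.notMem_empty, iff_false, not_and]
  intro hd hsub
  induction e using Sym2.ind with
  | _ x y =>
    have hx : x ∈ S := hsub x (by simp)
    have hy : y ∈ S := hsub y (by simp)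
    have hxy : x ≠ y := fun hxy => hd (by simp [Sym2.mk_isDiag_iff, hxy])
    have : ({x, y} : Finset V) ⊆ S := by
      intro z hz; rcases Finset.mem_insert.1 hz with rfl | hz
      · exact hx
      · rw [Finset.mem_singleton] at hz; subst hz; exact hy
    have h2 : ({x, y} : Finset V).card = 2 := by
      rw [Finset.card_insert_of_notMem (by simp [hxy]), Finset.card_singleton]
    have := Finset.card_le_card this
    omega

lemma edgesOf_mono {S T : Finset V} (h : S ⊆ T) : edgesOf S ⊆ edgesOf T := by
  intro e he
  rw [mem_edgesOf] at he ⊢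
  exact ⟨he.1, fun x hx => h (he.2 x hx)⟩

open Polynomial in
lemma mq_rec (w : Sym2 V → ℝ) {S : Finset V} {v : V} (hv : v ∈ S) :
    mq w S = X * mq w (S.erase v)
      + ∑ u ∈ S.erase v, C (-(w s(u, v))) * mq w ((S.erase v).erase u) := by
  classical
  have hSn : S.card = (S.erase v).card + 1 := by
    rw [Finset.card_erase_of_mem hv]
    have := Finset.card_pos.2 ⟨v, hv⟩; omega
  -- split the sum
  rw [mq, ← Finset.sum_filter_add_sum_filter_not (matchingsIn (edgesOf S))
    (fun D => ∀ e ∈ D, v ∉ e)]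
  congr 1
  · -- matchings avoiding v
    have hA : (matchingsIn (edgesOf S)).filter (fun D => ∀ e ∈ D, v ∉ e)
        = matchingsIn (edgesOf (S.erase v)) := by
      ext D
      simp only [Finset.mem_filter, mem_matchingsIn, IsMatchingIn]
      constructor
      · rintro ⟨⟨h1, h2, h3⟩, h4⟩
        refine ⟨fun e he => ?_, h2, h3⟩
        have := mem_edgesOf.1 (h1 he)
        rw [mem_edgesOf]
        refine ⟨this.1, fun x hx => Finset.mem_erase.2 ⟨?_, this.2 x hx⟩⟩
        rintro rfl; exact h4 e he hx
      · rintro ⟨h1, h2, h3⟩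
        refine ⟨⟨fun e he => edgesOf_mono (Finset.erase_subset v S) (h1 he), h2, h3⟩,
          fun e he hve => ?_⟩
        have := mem_edgesOf.1 (h1 he)
        exact Finset.notMem_erase v S (this.2 v hve)
    rw [hA, mq, Finset.mul_sum]
    refine Finset.sum_congr rfl fun D hD => ?_
    have h2 : 2 * D.card ≤ (S.erase v).card := card_matching_le hD
    have hexp : S.card - 2 * D.card = ((S.erase v).card - 2 * D.card) + 1 := by omega
    rw [hexp, pow_succ]; ring
  · -- matchings covering v
    have hB : (matchingsIn (edgesOf S)).filter (fun D => ¬ ∀ e ∈ D, v ∉ e)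
        = (S.erase v).biUnion (fun u => (matchingsIn (edgesOf S)).filter
            (fun D => s(u, v) ∈ D)) := by
      ext D
      simp only [Finset.mem_filter, Finset.mem_biUnion]
      constructor
      · rintro ⟨hD, h4⟩
        push_neg at h4
        obtain ⟨e, he, hve⟩ := h4
        obtain ⟨u, rfl⟩ := Sym2.mem_iff_exists.1 hve
        have hm := mem_matchingsIn.1 hD
        have heS := mem_edgesOf.1 (hm.1 he)
        have hu : u ∈ S := heS.2 u (by simp)
        have huv : u ≠ v := by
          rintro rfl; exact heS.1 (by simp [Sym2.mk_isDiag_iff])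
        exact ⟨u, Finset.mem_erase.2 ⟨huv, hu⟩, hD, by rwa [Sym2.eq_swap]⟩
      · rintro ⟨u, hu, hD, he⟩
        exact ⟨hD, fun h => h _ he (by simp)⟩
    rw [hB, Finset.sum_biUnion]
    · refine Finset.sum_congr rfl fun u hu => ?_
      have huv : u ≠ v := (Finset.mem_erase.1 hu).1
      have huS : u ∈ S := (Finset.mem_erase.1 hu).2
      have he₀S : s(u, v) ∈ edgesOf S := by
        rw [mem_edgesOf]
        refine ⟨by simp [Sym2.mk_isDiag_iff, huv], fun x hx => ?_⟩
        rcases Sym2.mem_iff.1 hx with rfl | rfl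
        exacts [huS, hv]
      have hT' : ((S.erase v).erase u).card = S.card - 2 := by
        rw [Finset.card_erase_of_mem hu, Finset.card_erase_of_mem hv]; omega
      rw [mq, Finset.mul_sum]
      refine Finset.sum_nbij' (fun D => D.erase s(u, v)) (fun D' => insert s(u, v) D')
        ?_ ?_ ?_ ?_ ?_
      · -- erase lands in matchings of T'
        intro D hD
        rw [Finset.mem_filter] at hD
        obtain ⟨hDm, he₀D⟩ := hD
        obtain ⟨h1, h2, h3⟩ := mem_matchingsIn.1 hDm
        rw [mem_matchingsIn]
        refine ⟨fun f hf => ?_, fun f hf => h2 f (Finset.erase_subset _ _ hf),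
          fun e he f hf hne x => h3 e (Finset.erase_subset _ _ he) f
            (Finset.erase_subset _ _ hf) hne x⟩
        obtain ⟨hfne, hfD⟩ := Finset.mem_erase.1 hf
        have hfS := mem_edgesOf.1 (h1 hfD)
        rw [mem_edgesOf]
        refine ⟨hfS.1, fun x hx => ?_⟩
        refine Finset.mem_erase.2 ⟨?_, Finset.mem_erase.2 ⟨?_, hfS.2 x hx⟩⟩
        · rintro rfl
          exact h3 f hfD s(x, v) he₀D hfne x ⟨hx, by simp⟩
        · rintro rfl
          exact h3 f hfD s(u, x) he₀D hfne x ⟨hx, by simp⟩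
      · -- insert lands in the filtered set
        intro D' hD'
        obtain ⟨h1, h2, h3⟩ := mem_matchingsIn.1 hD'
        have hvert : ∀ f ∈ D', ∀ x ∈ f, x ≠ u ∧ x ≠ v := by
          intro f hf x hx
          have := (mem_edgesOf.1 (h1 hf)).2 x hx
          exact ⟨(Finset.mem_erase.1 this).1,
            (Finset.mem_erase.1 (Finset.mem_erase.1 this).2).1⟩
        have he₀D' : s(u, v) ∉ D' := by
          intro h
          exact (hvert _ h u (by simp)).1 rfl
        rw [Finset.mem_filter, mem_matchingsIn]
        refine ⟨⟨fun f hf => ?_, fun f hf => ?_, fun e he f hf hne x hx => ?_⟩,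
          Finset.mem_insert_self _ _⟩
        · rcases Finset.mem_insert.1 hf with rfl | hf
          · exact he₀S
          · exact edgesOf_mono (fun z hz => Finset.mem_of_mem_erase
              (Finset.mem_of_mem_erase hz)) (h1 hf)
        · rcases Finset.mem_insert.1 hf with rfl | hf
          · simp [Sym2.mk_isDiag_iff, huv]
          · exact h2 f hf
        · have hkey : ∀ f ∈ D', ∀ x : V, ¬(x ∈ s(u, v) ∧ x ∈ f) := by
            rintro f hf x ⟨hx1, hx2⟩
            rcases Sym2.mem_iff.1 hx1 with h' | h'
            · exact (hvert f hf x hx2).1 h'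
            · exact (hvert f hf x hx2).2 h'
          rcases Finset.mem_insert.1 he with he' | he'
          · rcases Finset.mem_insert.1 hf with hf' | hf'
            · exact hne (by rw [he', hf'])
            · subst he'; exact hkey f hf' x hx
          · rcases Finset.mem_insert.1 hf with hf' | hf'
            · subst hf'
              exact hkey e he' x ⟨hx.2, hx.1⟩
            · exact h3 e he' f hf' hne x hx
      · intro D hD
        rw [Finset.mem_filter] at hD
        exact Finset.insert_erase hD.2
      · intro D' hD'
        obtain ⟨h1, _, _⟩ := mem_matchingsIn.1 hD'
        apply Finset.erase_insert
        intro h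
        have := (mem_edgesOf.1 (h1 h)).2 v (by simp)
        exact Finset.notMem_erase v S (Finset.mem_of_mem_erase this)
      · -- terms agree
        intro D hD
        rw [Finset.mem_filter] at hD
        obtain ⟨hDm, he₀D⟩ := hD
        have hk : D.card = (D.erase s(u, v)).card + 1 := by
          rw [Finset.card_erase_of_mem he₀D]
          have := Finset.card_pos.2 ⟨_, he₀D⟩; omega
        have hprod : ∏ e ∈ D, w e = w s(u, v) * ∏ e ∈ D.erase s(u, v), w e :=
          (Finset.mul_prod_erase D w he₀D).symm
        have h2 : 2 * D.card ≤ S.card := card_matching_le hDm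
        have hexp : ((S.erase v).erase u).card - 2 * (D.erase s(u, v)).card
            = S.card - 2 * D.card := by
          rw [hT']; omega
        rw [hexp, hk, hprod, pow_succ]
        simp only [map_mul, map_neg, map_pow, map_one]
        ring
    · -- pairwise disjointness of the biUnion pieces
      intro u hu u' hu' hne
      simp only [Function.onFun]
      rw [Finset.disjoint_left]
      intro D hD hD'
      rw [Finset.mem_filter] at hD hD'
      obtain ⟨hDm, h1⟩ := hD
      obtain ⟨_, h2⟩ := hD'
      have h3 := (mem_matchingsIn.1 hDm).2.2
      have hne' : s(u, v) ≠ s(u', v) := by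
        intro h
        rcases Sym2.eq_iff.1 h with ⟨h1, -⟩ | ⟨h1, -⟩
        · exact hne h1
        · exact (Finset.mem_erase.1 hu).1 h1
      exact h3 _ h1 _ h2 hne' v ⟨by simp, by simp⟩

/-! ### sorted enumeration of a multiset -/

/-- `k`-th smallest element of a real multiset. -/
def msel (s : Multiset ℝ) (k : ℕ) : ℝ := (s.sort (· ≤ ·)).getD k 0

lemma msel_mem {s : Multiset ℝ} {k : ℕ} (hk : k < Multiset.card s) : msel s k ∈ s := by
  have hk' : k < (s.sort (· ≤ ·)).length := by rwa [Multiset.length_sort]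
  rw [msel, List.getD_eq_getElem _ _ hk']
  exact Multiset.mem_sort (· ≤ ·) |>.1 (List.getElem_mem _)

lemma msel_mono {s : Multiset ℝ} {j k : ℕ} (hjk : j ≤ k) (hk : k < Multiset.card s) :
    msel s j ≤ msel s k := by
  have hk' : k < (s.sort (· ≤ ·)).length := by rwa [Multiset.length_sort]
  have hj' : j < (s.sort (· ≤ ·)).length := lt_of_le_of_lt hjk hk'
  rw [msel, msel, List.getD_eq_get _ _ ⟨j, hj'⟩, List.getD_eq_get _ _ ⟨k, hk'⟩]
  exact (Multiset.pairwise_sort s (· ≤ ·)).rel_get_of_le hjk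

lemma msel_eq_of_map {s : Multiset ℝ} {x : ℕ → ℝ} {n : ℕ}
    (hs : s = Multiset.map x (Finset.range n).val)
    (hx : ∀ i j, i ≤ j → j < n → x i ≤ x j) :
    ∀ k, k < n → msel s k = x k := by
  have hL : s = ((List.range n).map x : List ℝ) := by
    rw [hs]; rfl
  have hlen : ((List.range n).map x).length = n := by simp
  have hsorted : List.Pairwise (· ≤ ·) ((List.range n).map x) := by
    rw [List.pairwise_iff_get]
    intro i j hij
    have hi : (i : ℕ) < n := by omega
    have hj : (j : ℕ) < n := by
      have := j.isLt; omega
    simp only [List.get_eq_getElem, List.getElem_map, List.getElem_range]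
    exact hx _ _ (le_of_lt hij) hj
  have hperm : s.sort (· ≤ ·) = (List.range n).map x := by
    apply List.Perm.eq_of_pairwise' (Multiset.pairwise_sort _ _) hsorted
    exact Multiset.coe_eq_coe.1 (by rw [Multiset.sort_eq, ← hL])
  intro k hk
  rw [msel, hperm, List.getD_eq_getElem _ _ (by simpa using hk)]
  simp [hk]

lemma multiset_eq_map_msel (s : Multiset ℝ) :
    s = Multiset.map (msel s) (Finset.range (Multiset.card s)).val := by
  conv_lhs => rw [← Multiset.sort_eq s (· ≤ ·)]
  have hlen : (s.sort (· ≤ ·)).length = Multiset.card s := Multiset.length_sort _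
  have : s.sort (· ≤ ·) = (List.range (Multiset.card s)).map (msel s) := by
    apply List.ext_getElem (by simpa using hlen.symm)
    intro i h1 h2
    simp only [List.getElem_map, List.getElem_range]
    rw [msel, List.getD_eq_getElem _ _ h1]
  rw [this]; rfl

/-! ### sign helpers -/

lemma sign_prod_neg {ι : Type*} {s : Finset ι} {f : ι → ℝ} (h : ∀ i ∈ s, f i < 0) :
    0 < (-1 : ℝ) ^ s.card * ∏ i ∈ s, f i := by
  have h1 : 0 < ∏ i ∈ s, (-f i) := Finset.prod_pos (fun i hi => neg_pos.2 (h i hi))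
  have h2 : ∏ i ∈ s, (-f i) = (-1 : ℝ) ^ s.card * ∏ i ∈ s, f i := by
    rw [← Finset.prod_const, ← Finset.prod_mul_distrib]
    exact Finset.prod_congr rfl fun i _ => by ring
  rwa [h2] at h1

lemma mul_neg_of_signs {e : ℕ} {a b : ℝ} (h1 : 0 < (-1 : ℝ) ^ e * a)
    (h2 : 0 < (-1 : ℝ) ^ (e + 1) * b) : a * b < 0 := by
  have hsq : ((-1 : ℝ) ^ e) * ((-1 : ℝ) ^ e) = 1 := by
    rw [← pow_add]
    exact Even.neg_one_pow ⟨e, by ring⟩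
  rw [pow_succ] at h2
  nlinarith [mul_pos h1 h2]

open Polynomial in
lemma exists_root_between {p : Polynomial ℝ} {α β : ℝ} (hab : α < β)
    (h : p.eval α * p.eval β < 0) : ∃ x, α < x ∧ x < β ∧ p.eval x = 0 := by
  have hcont : ContinuousOn (fun x => p.eval x) (Set.Icc α β) :=
    p.continuous.continuousOn
  rcases lt_or_ge (p.eval α) 0 with hα | hα
  · have hβ : 0 < p.eval β := by nlinarith
    have := intermediate_value_Ioo (le_of_lt hab) hcont (f := fun x => p.eval x)
    obtain ⟨x, hx, hfx⟩ := this ⟨hα, hβ⟩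
    exact ⟨x, hx.1, hx.2, hfx⟩
  · have hα' : 0 < p.eval α := by
      rcases lt_or_eq_of_le hα with h' | h'
      · exact h'
      · exfalso; rw [← h'] at h; simp at h
    have hβ : p.eval β < 0 := by nlinarith
    have := intermediate_value_Ioo' (le_of_lt hab) hcont (f := fun x => p.eval x)
    obtain ⟨x, hx, hfx⟩ := this ⟨hβ, hα'⟩
    exact ⟨x, hx.1, hx.2, hfx⟩

open Polynomial in
lemma monic_pos_at_top {p : Polynomial ℝ} (hp : p.Monic) (hd : 0 < p.natDegree) (B : ℝ) :
    ∃ x, B < x ∧ 0 < p.eval x := by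
  have hdeg : 0 < p.degree := by
    rw [degree_eq_natDegree hp.ne_zero]; exact_mod_cast hd
  have ht : Tendsto (fun x => p.eval x) atTop atTop :=
    p.tendsto_atTop_of_leadingCoeff_nonneg hdeg (by rw [hp.leadingCoeff]; norm_num)
  obtain ⟨x, hx1, hx2⟩ := ((ht.eventually_gt_atTop 0).and (eventually_gt_atTop B)).exists
  exact ⟨x, hx2, hx1⟩

open Polynomial in
lemma mq_eval_neg (w : Sym2 V → ℝ) (S : Finset V) (t : ℝ) :
    (mq w S).eval (-t) = (-1 : ℝ) ^ S.card * (mq w S).eval t := by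
  rw [mq]
  simp only [eval_finset_sum, eval_mul, eval_C, eval_pow, eval_X]
  rw [Finset.mul_sum]
  refine Finset.sum_congr rfl fun D hD => ?_
  have h2 : 2 * D.card ≤ S.card := card_matching_le hD
  have hsplit : S.card = (S.card - 2 * D.card) + 2 * D.card := by omega
  have hneg : (-t) ^ (S.card - 2 * D.card)
      = (-1 : ℝ) ^ (S.card - 2 * D.card) * t ^ (S.card - 2 * D.card) := by
    rw [neg_pow]
  have hpow : ((-1 : ℝ)) ^ S.card
      = (-1 : ℝ) ^ (S.card - 2 * D.card) * (-1 : ℝ) ^ (2 * D.card) := by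
    conv_lhs => rw [hsplit]
    rw [pow_add]
  have he : ((-1 : ℝ)) ^ (2 * D.card) = 1 := Even.neg_one_pow ⟨D.card, by ring⟩
  rw [hneg, hpow, he]
  ring

lemma neg_one_pow_mul_self' (e : ℕ) (a : ℝ) : (-1 : ℝ) ^ e * ((-1 : ℝ) ^ e * a) = a := by
  rw [← mul_assoc, ← pow_add]
  rw [Even.neg_one_pow ⟨e, by ring⟩, one_mul]

open Polynomial in
lemma roots_eq_of_distinct {p : Polynomial ℝ} (hp : p ≠ 0) {n : ℕ}
    (hdeg : p.natDegree = n) {x : ℕ → ℝ} (hroot : ∀ j, j < n → p.eval (x j) = 0)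
    (hinj : ∀ i j, i < j → j < n → x i < x j) :
    p.roots = Multiset.map x (Finset.range n).val := by
  set M := Multiset.map x (Finset.range n).val with hM
  have hnodup : M.Nodup := by
    refine Multiset.Nodup.map_on ?_ (Finset.range n).nodup
    intro i hi j hj hij
    simp only [Finset.mem_val, Finset.mem_range] at hi hj
    by_contra hne
    rcases Nat.lt_or_ge i j with h | h
    · exact absurd hij (ne_of_lt (hinj i j h hj))
    · have : j < i := by omega
      exact absurd hij.symm (ne_of_lt (hinj j i this hi))
  have hle : M ≤ p.roots := by
    rw [Multiset.le_iff_count]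
    intro a
    by_cases ha : a ∈ M
    · have h1 : M.count a ≤ 1 := Multiset.nodup_iff_count_le_one.1 hnodup a
      have h2 : a ∈ p.roots := by
        obtain ⟨j, hj, rfl⟩ := Multiset.mem_map.1 ha
        simp only [Finset.mem_val, Finset.mem_range] at hj
        exact Polynomial.mem_roots'.2 ⟨hp, hroot j hj⟩
      have h3 : 1 ≤ p.roots.count a := Multiset.one_le_count_iff_mem.2 h2
      omega
    · simp [Multiset.count_eq_zero_of_notMem ha]
  have hcard : Multiset.card p.roots ≤ n := by
    have := p.card_roots' ; omega
  have hcard' : Multiset.card p.roots ≤ Multiset.card M := by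
    simp only [hM, Multiset.card_map, Finset.range_val, Multiset.card_range]
    exact hcard
  exact (Multiset.eq_of_le_of_card_le hle hcard').symm

open Polynomial in
lemma mq_factor (w : Sym2 V → ℝ) {S : Finset V}
    (hc : Multiset.card (mq w S).roots = S.card) :
    mq w S = ∏ k ∈ Finset.range S.card, (X - C (msel (mq w S).roots k)) := by
  have h1 := Polynomial.C_leadingCoeff_mul_prod_multiset_X_sub_C (p := mq w S)
    (by rw [mq_natDegree]; exact hc)
  rw [(mq_monic w S).leadingCoeff, map_one, one_mul] at h1
  set R := (mq w S).roots with hR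
  have h2 := multiset_eq_map_msel R
  rw [hc] at h2
  rw [← h1]
  nth_rewrite 1 [h2]
  rw [Multiset.map_map, Finset.prod_eq_multiset_prod]
  rfl

open Polynomial in
lemma eval_prod_X_sub_C {m : ℕ} (c : ℕ → ℝ) (t : ℝ) :
    (∏ k ∈ Finset.range m, (X - C (c k))).eval t = ∏ k ∈ Finset.range m, (t - c k) := by
  rw [eval_prod]
  exact Finset.prod_congr rfl fun k _ => by simp

open Polynomial in
theorem key_interlace (w : Sym2 V → ℝ) (hw : ∀ e ∈ completeEdges V, 0 < w e) :
    ∀ n : ℕ, ∀ S : Finset V, S.card = n →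
      Multiset.card (mq w S).roots = S.card ∧
        ∀ v ∈ S, ∀ k, k + 1 < S.card →
          msel (mq w S).roots k < msel (mq w (S.erase v)).roots k ∧
          msel (mq w (S.erase v)).roots k < msel (mq w S).roots (k + 1) := by
  intro n
  induction n using Nat.strong_induction_on with
  | _ n IH =>
  intro S hS
  rcases Nat.lt_or_ge n 2 with hn2 | hn2
  · -- base cases n = 0, 1
    have hedges : edgesOf S = ∅ := edgesOf_card_le_one w (by omega)
    have hX : mq w S = X ^ S.card := mq_of_no_edges w hedges
    constructor
    · rw [hX, Polynomial.roots_pow, Polynomial.roots_X]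
      simp
    · intro v hv k hk
      exfalso
      rw [hS] at hk
      have hvS : 1 ≤ S.card := Finset.card_pos.2 ⟨v, hv⟩
      omega
  · -- main case n ≥ 2
    have hScard : 0 < S.card := by omega
    suffices main : ∀ v ∈ S, Multiset.card (mq w S).roots = S.card ∧
        ∀ k, k + 1 < S.card →
          msel (mq w S).roots k < msel (mq w (S.erase v)).roots k ∧
          msel (mq w (S.erase v)).roots k < msel (mq w S).roots (k + 1) by
      obtain ⟨v₀, hv₀⟩ := Finset.card_pos.1 hScard
      exact ⟨(main v₀ hv₀).1, fun v hv => (main v hv).2⟩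
    intro v hv
    set T := S.erase v with hTdef
    have hTcard : T.card = n - 1 := by
      rw [hTdef, Finset.card_erase_of_mem hv, hS]
    obtain ⟨hTroots, hTint⟩ := IH (n - 1) (by omega) T hTcard
    set b : ℕ → ℝ := msel (mq w T).roots with hbdef
    have hbcard : Multiset.card (mq w T).roots = n - 1 := by rw [hTroots, hTcard]
    have hbmono : ∀ i j, i ≤ j → j < n - 1 → b i ≤ b j := by
      intro i j hij hj
      exact msel_mono hij (by rw [hbcard]; exact hj)
    have hTne : T.Nonempty := Finset.card_pos.1 (by omega)
    -- strict monotonicity of b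
    have hbstep : ∀ k, k + 1 < n - 1 → b k < b (k + 1) := by
      intro k hk
      obtain ⟨u₀, hu₀⟩ := hTne
      have h := hTint u₀ hu₀ k (by rw [hTcard]; exact hk)
      exact lt_trans h.1 h.2
    have hbstrict : ∀ i j, i < j → j < n - 1 → b i < b j := by
      intro i j hij hj
      have h1 : i + 1 < n - 1 ∨ i + 1 = j ∧ j < n - 1 := by omega
      rcases Nat.lt_or_ge (i + 1) (n - 1) with h | h
      · exact lt_of_lt_of_le (hbstep i h) (hbmono (i + 1) j (by omega) hj)
      · omega
    -- the sign claim
    have hsign : ∀ j, j < n - 1 → 0 < (-1 : ℝ) ^ (n - 1 - j) * (mq w S).eval (b j) := by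
      intro j hj
      have hbj_root : (mq w T).eval (b j) = 0 := by
        have hmem : b j ∈ (mq w T).roots := msel_mem (by rw [hbcard]; exact hj)
        exact (Polynomial.mem_roots'.1 hmem).2
      rw [mq_rec w hv]
      simp only [← hTdef, eval_add, eval_mul, eval_X, eval_finset_sum, eval_C, hbj_root,
        mul_zero, zero_add]
      rw [Finset.mul_sum]
      refine Finset.sum_pos ?_ hTne
      intro u hu
      have huv : u ≠ v := (Finset.mem_erase.1 (hTdef ▸ hu)).1
      have hwpos : 0 < w s(u, v) := hw _ (by
        simp [completeEdges, Sym2.mk_isDiag_iff, huv])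
      have hucard : (T.erase u).card = n - 2 := by
        rw [Finset.card_erase_of_mem hu, hTcard]; omega
      obtain ⟨huroots, -⟩ := IH (n - 2) (by omega) (T.erase u) hucard
      set c : ℕ → ℝ := msel (mq w (T.erase u)).roots with hcdef
      have hccard : Multiset.card (mq w (T.erase u)).roots = n - 2 := by
        rw [huroots, hucard]
      have hfact : mq w (T.erase u)
          = ∏ i ∈ Finset.range (n - 2), (X - C (c i)) := by
        have := mq_factor w (S := T.erase u) (by rw [huroots])
        rwa [hucard] at this
      have heval : (mq w (T.erase u)).eval (b j)
          = ∏ i ∈ Finset.range (n - 2), (b j - c i) := by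
        rw [hfact, eval_prod_X_sub_C]
      -- interlacing between b and c
      have hbc1 : ∀ i, i < n - 2 → i < j → c i < b j := by
        intro i hi hij
        have h := hTint u hu i (by rw [hTcard]; omega)
        exact lt_of_lt_of_le h.2 (hbmono (i + 1) j (by omega) hj)
      have hbc2 : ∀ i, i < n - 2 → j ≤ i → b j < c i := by
        intro i hi hij
        have h := hTint u hu i (by rw [hTcard]; omega)
        exact lt_of_le_of_lt (hbmono j i hij (by omega)) h.1
      -- sign of the c-product
      have hcprod : 0 < (-1 : ℝ) ^ (n - 2 - j) * (mq w (T.erase u)).eval (b j) := by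
        rw [heval, ← Finset.prod_filter_mul_prod_filter_not (Finset.range (n - 2))
          (fun i => i < j)]
        have hIco : (Finset.range (n - 2)).filter (fun i => ¬ i < j)
            = Finset.Ico j (n - 2) := by
          ext i; simp only [Finset.mem_filter, Finset.mem_range, Finset.mem_Ico]; omega
        have hcardIco : ((Finset.range (n - 2)).filter (fun i => ¬ i < j)).card
            = n - 2 - j := by rw [hIco, Nat.card_Ico]
        have hpos : 0 < ∏ i ∈ (Finset.range (n - 2)).filter (fun i => i < j),
            (b j - c i) := by
          refine Finset.prod_pos fun i hi => ?_
          rw [Finset.mem_filter, Finset.mem_range] at hi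
          have := hbc1 i hi.1 hi.2
          linarith
        have hneg : 0 < (-1 : ℝ) ^ (n - 2 - j)
            * ∏ i ∈ (Finset.range (n - 2)).filter (fun i => ¬ i < j), (b j - c i) := by
          rw [← hcardIco]
          refine sign_prod_neg fun i hi => ?_
          rw [Finset.mem_filter, Finset.mem_range] at hi
          have := hbc2 i hi.1 (by omega)
          linarith
        calc (0 : ℝ) < ((-1 : ℝ) ^ (n - 2 - j)
              * ∏ i ∈ (Finset.range (n - 2)).filter (fun i => ¬ i < j), (b j - c i))
              * ∏ i ∈ (Finset.range (n - 2)).filter (fun i => i < j), (b j - c i) :=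
            mul_pos hneg hpos
          _ = (-1 : ℝ) ^ (n - 2 - j)
              * (((Finset.range (n - 2)).filter (fun i => i < j)).prod (fun i => b j - c i)
                * ((Finset.range (n - 2)).filter (fun i => ¬ i < j)).prod
                    (fun i => b j - c i)) := by ring
      -- combine
      have hexp : n - 1 - j = (n - 2 - j) + 1 := by omega
      rw [hexp, pow_succ]
      have halg : (-1 : ℝ) ^ (n - 2 - j) * (-1) * (-(w s(u, v)) * (mq w (T.erase u)).eval (b j))
          = w s(u, v) * ((-1 : ℝ) ^ (n - 2 - j) * (mq w (T.erase u)).eval (b j)) := by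
        ring
      rw [halg]
      exact mul_pos hwpos hcprod
    -- mq w S basic facts
    have hmon : (mq w S).Monic := mq_monic w S
    have hdegS : (mq w S).natDegree = n := by rw [mq_natDegree, hS]
    -- construct the roots of mq w S
    have hex : ∀ j : ℕ, ∃ y : ℝ, j < n →
        ((mq w S).eval y = 0 ∧ (j < n - 1 → y < b j) ∧ (1 ≤ j → b (j - 1) < y)) := by
      intro j
      by_cases hj : j < n
      swap
      · exact ⟨0, fun h => absurd h hj⟩
      rcases Nat.eq_zero_or_pos j with rfl | hj1
      · -- lowest root
        obtain ⟨z, hz1, hz2⟩ := monic_pos_at_top hmon (by omega) (-(b 0))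
        have hαb : -z < b 0 := by linarith
        have h2 : 0 < (-1 : ℝ) ^ ((n - 1) + 1) * (mq w S).eval (-z) := by
          rw [show (n - 1) + 1 = n by omega, mq_eval_neg, hS, neg_one_pow_mul_self']
          exact hz2
        have h1 : 0 < (-1 : ℝ) ^ (n - 1) * (mq w S).eval (b 0) := by
          have := hsign 0 (by omega)
          simpa using this
        have hprod : (mq w S).eval (-z) * (mq w S).eval (b 0) < 0 := by
          have := mul_neg_of_signs h1 h2
          linarith [this, mul_comm ((mq w S).eval (b 0)) ((mq w S).eval (-z))]
        obtain ⟨y, hy1, hy2, hy3⟩ := exists_root_between hαb hprod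
        exact ⟨y, fun _ => ⟨hy3, fun _ => hy2, fun h => by omega⟩⟩
      · by_cases hjn : j < n - 1
        · -- middle roots
          have h1 : 0 < (-1 : ℝ) ^ (n - 1 - j) * (mq w S).eval (b j) := hsign j hjn
          have h2 : 0 < (-1 : ℝ) ^ ((n - 1 - j) + 1) * (mq w S).eval (b (j - 1)) := by
            have := hsign (j - 1) (by omega)
            rwa [show n - 1 - (j - 1) = (n - 1 - j) + 1 by omega] at this
          have hprod : (mq w S).eval (b (j - 1)) * (mq w S).eval (b j) < 0 := by
            have := mul_neg_of_signs h1 h2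
            linarith [this, mul_comm ((mq w S).eval (b j)) ((mq w S).eval (b (j - 1)))]
          obtain ⟨y, hy1, hy2, hy3⟩ :=
            exists_root_between (hbstrict (j - 1) j (by omega) hjn) hprod
          exact ⟨y, fun _ => ⟨hy3, fun _ => hy2, fun _ => hy1⟩⟩
        · -- top root, j = n - 1
          have hj' : j = n - 1 := by omega
          have hnegtop : (mq w S).eval (b (n - 2)) < 0 := by
            have := hsign (n - 2) (by omega)
            rw [show n - 1 - (n - 2) = 1 by omega] at this
            simpa using this
          obtain ⟨z, hz1, hz2⟩ := monic_pos_at_top hmon (by omega) (b (n - 2))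
          have hprod : (mq w S).eval (b (n - 2)) * (mq w S).eval z < 0 :=
            mul_neg_of_neg_of_pos hnegtop hz2
          obtain ⟨y, hy1, hy2, hy3⟩ := exists_root_between hz1 hprod
          refine ⟨y, fun _ => ⟨hy3, fun h => by omega, fun _ => ?_⟩⟩
          rw [hj']
          exact hy1
    choose x hx using hex
    have hxroot : ∀ j, j < n → (mq w S).eval (x j) = 0 := fun j hj => (hx j hj).1
    have hxup : ∀ j, j < n - 1 → x j < b j := fun j hj => (hx j (by omega)).2.1 hj
    have hxlow : ∀ j, 1 ≤ j → j < n → b (j - 1) < x j := fun j h1 hj => (hx j hj).2.2 h1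
    have hstrict : ∀ i j, i < j → j < n → x i < x j := by
      intro i j hij hj
      have h1 : x i < b i := hxup i (by omega)
      have h2 : b i ≤ b (j - 1) := hbmono i (j - 1) (by omega) (by omega)
      have h3 : b (j - 1) < x j := hxlow j (by omega) hj
      linarith
    have hrootsS : (mq w S).roots = Multiset.map x (Finset.range n).val :=
      roots_eq_of_distinct hmon.ne_zero hdegS hxroot hstrict
    have hcardS : Multiset.card (mq w S).roots = S.card := by
      rw [hrootsS, Multiset.card_map, Finset.range_val, Multiset.card_range, hS]
    have hmsel : ∀ k, k < n → msel (mq w S).roots k = x k := by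
      refine msel_eq_of_map hrootsS ?_
      intro i j hij hj
      rcases lt_or_eq_of_le hij with h | h
      · exact le_of_lt (hstrict i j h hj)
      · rw [h]
    refine ⟨hcardS, ?_⟩
    intro k hk
    rw [hS] at hk
    constructor
    · rw [hmsel k (by omega)]
      exact hxup k (by omega)
    · rw [hmsel (k + 1) (by omega)]
      have := hxlow (k + 1) (by omega) (by omega)
      rwa [show k + 1 - 1 = k by omega] at this

/-! ### complex plumbing -/

lemma neg_I_pow_coeff {n k : ℕ} (h : 2 * k ≤ n) :
    (-Complex.I) ^ n * ((-1 : ℂ) ^ k * Complex.I ^ (n - 2 * k)) = 1 := by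
  have hn : n = (n - 2 * k) + 2 * k := by omega
  have hII : (-Complex.I) * Complex.I = 1 := by
    rw [neg_mul, Complex.I_mul_I, neg_neg]
  have h2 : ((-Complex.I) ^ 2) = -1 := by
    rw [neg_pow, Complex.I_sq]; ring
  calc (-Complex.I) ^ n * ((-1 : ℂ) ^ k * Complex.I ^ (n - 2 * k))
      = ((-Complex.I) ^ (n - 2 * k) * (-Complex.I) ^ (2 * k))
        * ((-1 : ℂ) ^ k * Complex.I ^ (n - 2 * k)) := by rw [← pow_add, ← hn]
    _ = ((-Complex.I) ^ (n - 2 * k) * Complex.I ^ (n - 2 * k))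
        * ((-Complex.I) ^ (2 * k) * (-1 : ℂ) ^ k) := by ring
    _ = (-Complex.I) ^ (2 * k) * (-1 : ℂ) ^ k := by
        rw [← mul_pow, hII, one_pow, one_mul]
    _ = (-1 : ℂ) ^ k * (-1 : ℂ) ^ k := by rw [pow_mul, h2]
    _ = 1 := by
        rw [← pow_add]
        exact Even.neg_one_pow ⟨k, by ring⟩

open Polynomial in
lemma matchPolyS_eq_comp (w : Sym2 V → ℝ) (S : Finset V) :
    matchPolyS S w = C ((-Complex.I) ^ S.card)
      * (((mq w S).map (algebraMap ℝ ℂ)).comp (C Complex.I * X)) := by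
  rw [matchPolyS, mq, Polynomial.map_sum, Polynomial.sum_comp, Finset.mul_sum]
  refine Finset.sum_congr rfl fun D hD => ?_
  have h2 : 2 * D.card ≤ S.card := card_matching_le hD
  rw [Polynomial.map_mul, Polynomial.map_C, Polynomial.map_pow, Polynomial.map_X,
    mul_comp, C_comp, pow_comp, X_comp, mul_pow, ← C_pow]
  have halg : (algebraMap ℝ ℂ) ((-1 : ℝ) ^ D.card * ∏ e ∈ D, w e)
      = (-1 : ℂ) ^ D.card * ∏ e ∈ D, (w e : ℂ) := by
    push_cast
    rfl
  rw [halg]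
  have : C ((-Complex.I) ^ S.card) * (C ((-1 : ℂ) ^ D.card * ∏ e ∈ D, (w e : ℂ))
      * (C (Complex.I ^ (S.card - 2 * D.card)) * X ^ (S.card - 2 * D.card)))
      = C ((-Complex.I) ^ S.card * ((-1 : ℂ) ^ D.card * Complex.I ^ (S.card - 2 * D.card)))
        * C (∏ e ∈ D, (w e : ℂ)) * X ^ (S.card - 2 * D.card) := by
    rw [map_mul, map_mul, map_mul, map_pow, map_pow, map_pow]
    ring
  rw [this, neg_I_pow_coeff h2, map_one, one_mul]

open Polynomial in
lemma matchPolyS_factor (w : Sym2 V → ℝ) {S : Finset V} {n : ℕ} {r : ℕ → ℝ}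
    (hn : S.card = n)
    (hfact : mq w S = ∏ k ∈ Finset.range n, (X - C (r k))) :
    matchPolyS S w
      = ∏ k ∈ Finset.range n, (X - C (-Complex.I * (r k : ℂ))) := by
  have hII : Complex.I * -Complex.I = 1 := by
    rw [mul_neg, Complex.I_mul_I, neg_neg]
  rw [matchPolyS_eq_comp, hfact, Polynomial.map_prod, Polynomial.prod_comp]
  have hterm : ∀ k, (((X : Polynomial ℝ) - C (r k)).map
      (algebraMap ℝ ℂ)).comp (C Complex.I * X)
      = C Complex.I * (X - C (-Complex.I * (r k : ℂ))) := by
    intro k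
    rw [Polynomial.map_sub, Polynomial.map_X, Polynomial.map_C, sub_comp, X_comp, C_comp]
    have : (algebraMap ℝ ℂ) (r k) = ((r k : ℝ) : ℂ) := rfl
    rw [this, mul_sub, ← map_mul, ← mul_assoc, hII]
    simp
  rw [Finset.prod_congr rfl (fun k _ => hterm k), Finset.prod_mul_distrib,
    Finset.prod_const, ← C_pow, Finset.card_range, ← mul_assoc, ← map_mul, hn, ← mul_pow]
  have : (-Complex.I) * Complex.I = 1 := by rw [neg_mul, Complex.I_mul_I, neg_neg]
  rw [this, one_pow, map_one, one_mul]

open Polynomial in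
lemma roots_prod_X_sub_C' {n : ℕ} (c : ℕ → ℂ) :
    (∏ k ∈ Finset.range n, (X - C (c k))).roots
      = Multiset.map c (Finset.range n).val := by
  have h : ∏ k ∈ Finset.range n, (X - C (c k))
      = ((Multiset.map c (Finset.range n).val).map (fun a => X - C a)).prod := by
    rw [Finset.prod_eq_multiset_prod, Multiset.map_map]
    rfl
  rw [h, Polynomial.roots_multiset_prod_X_sub_C]

open Polynomial

/-- strict interlacing of the (purely imaginary) zeros of `Z_G` and
`Z_{G−v}` on the complete graph with strictly positive dimer weights:
`a_1 < a'_1 < a_2 < ⋯ < a'_{N−1} < a_N`. -/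
theorem zeros_strictly_interlace (w : Sym2 V → ℝ)
    (hw : ∀ e ∈ completeEdges V, 0 < w e) (v : V) (N : ℕ)
    (hN : Fintype.card V = N) (a a' : ℕ → ℝ)
    (ha : (matchPolyS Finset.univ w).roots
        = Multiset.map (fun k => -Complex.I * (a k : ℂ)) (Finset.range N).val)
    (ha' : (matchPolyS (Finset.univ.erase v) w).roots
        = Multiset.map (fun k => -Complex.I * (a' k : ℂ)) (Finset.range (N - 1)).val)
    (hmono : ∀ j k, j ≤ k → k < N → a j ≤ a k)
    (hmono' : ∀ j k, j ≤ k → k < N - 1 → a' j ≤ a' k) :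
    ∀ k, k + 1 < N → a k < a' k ∧ a' k < a (k + 1) := by
  intro k hk
  have hNcard : (Finset.univ : Finset V).card = N := by rw [Finset.card_univ, hN]
  have hvU : v ∈ (Finset.univ : Finset V) := Finset.mem_univ v
  have hTc : ((Finset.univ : Finset V).erase v).card = N - 1 := by
    rw [Finset.card_erase_of_mem hvU, hNcard]
  obtain ⟨hcU, hintU⟩ := key_interlace w hw N Finset.univ hNcard
  obtain ⟨hcT, -⟩ := key_interlace w hw (N - 1) (Finset.univ.erase v) hTc
  set r : ℕ → ℝ := msel (mq w (Finset.univ : Finset V)).roots with hr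
  set r' : ℕ → ℝ := msel (mq w ((Finset.univ : Finset V).erase v)).roots with hr'
  have hfU : mq w Finset.univ = ∏ i ∈ Finset.range N, (X - C (r i)) := by
    have := mq_factor w (S := (Finset.univ : Finset V)) (by rw [hcU])
    rwa [hNcard] at this
  have hfT : mq w (Finset.univ.erase v)
      = ∏ i ∈ Finset.range (N - 1), (X - C (r' i)) := by
    have := mq_factor w (S := (Finset.univ : Finset V).erase v) (by rw [hcT])
    rwa [hTc] at this
  have hrootsU : (matchPolyS Finset.univ w).roots
      = Multiset.map (fun i => -Complex.I * (r i : ℂ)) (Finset.range N).val := by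
    rw [matchPolyS_factor w hNcard hfU, roots_prod_X_sub_C']
  have hrootsT : (matchPolyS (Finset.univ.erase v) w).roots
      = Multiset.map (fun i => -Complex.I * (r' i : ℂ)) (Finset.range (N - 1)).val := by
    rw [matchPolyS_factor w hTc hfT, roots_prod_X_sub_C']
  have hmain : ∀ {M : ℕ} {aa rr : ℕ → ℝ},
      Multiset.map (fun i => -Complex.I * (aa i : ℂ)) (Finset.range M).val
        = Multiset.map (fun i => -Complex.I * (rr i : ℂ)) (Finset.range M).val →
      (∀ i j, i ≤ j → j < M → aa i ≤ aa j) → (∀ i j, i ≤ j → j < M → rr i ≤ rr j) →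
      ∀ i, i < M → aa i = rr i := by
    intro M aa rr heq hma hmr i hi
    have h1 := congrArg (Multiset.map (fun z : ℂ => Complex.I * z)) heq
    rw [Multiset.map_map, Multiset.map_map] at h1
    have hcomp : ∀ f : ℕ → ℝ, ((fun z : ℂ => Complex.I * z)
        ∘ (fun i => -Complex.I * (f i : ℂ))) = fun i => ((f i : ℝ) : ℂ) := by
      intro f; funext i
      simp only [Function.comp_apply, ← mul_assoc, mul_neg, Complex.I_mul_I, neg_neg, one_mul]
    rw [hcomp, hcomp] at h1
    have h2 := congrArg (Multiset.map Complex.re) h1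
    rw [Multiset.map_map, Multiset.map_map] at h2
    have hcomp2 : ∀ f : ℕ → ℝ, (Complex.re ∘ fun i => ((f i : ℝ) : ℂ)) = f := by
      intro f; funext i; simp
    rw [hcomp2, hcomp2] at h2
    have e1 := msel_eq_of_map (x := aa) (n := M) rfl hma i hi
    have e2 := msel_eq_of_map (x := rr) (n := M) h2 hmr i hi
    exact e1.symm.trans e2
  have hrU : ∀ i j, i ≤ j → j < N → r i ≤ r j := by
    intro i j hij hj
    exact msel_mono hij (by rw [hcU, hNcard]; exact hj)
  have hrT : ∀ i j, i ≤ j → j < N - 1 → r' i ≤ r' j := by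
    intro i j hij hj
    exact msel_mono hij (by rw [hcT, hTc]; exact hj)
  have haa : ∀ i, i < N → a i = r i := hmain (ha.symm.trans hrootsU) hmono hrU
  have haa' : ∀ i, i < N - 1 → a' i = r' i := hmain (ha'.symm.trans hrootsT) hmono' hrT
  have hint := hintU v hvU k (by rw [hNcard]; exact hk)
  constructor
  · rw [haa k (by omega), haa' k (by omega)]
    exact hint.1
  · rw [haa' k (by omega), haa (k + 1) hk]
    exact hint.2
end
end

section
/- Let Δ be Poisson distributed with parameter c > 0 and let x > √c. If (M_even, M_odd) is a pair of [0,1]-valued random variables, with i.i.d. copies (M_even^{(i)}, M_odd^{(i)}), satisfying the distributional equations M_even =_d x²/(x² + Σ_{i=1}^Δ M_odd^{(i)}) and M_odd =_d x²/(x² + Σ_{i=1}^Δ M_even^{(i)}) (with Δ independent of the copies), then E[|M_even − M_odd|] ≤ (c²/x⁴) E[|M_even − M_odd|]; consequently M_even = M_odd almost surely. -/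
open scoped BigOperators ENNReal NNReal Nat
open MeasureTheory ProbabilityTheory Filter Finset

set_option maxHeartbeats 1000000

noncomputable section

private lemma contraction_abs (x s t : ℝ) (hx : 0 < x) (hs : 0 ≤ s) (ht : 0 ≤ t) :
    |x ^ 2 / (x ^ 2 + s) - x ^ 2 / (x ^ 2 + t)| ≤ |s - t| / x ^ 2 := by
  have hx2 : 0 < x ^ 2 := by positivity
  have hxs : 0 < x ^ 2 + s := by linarith
  have hxt : 0 < x ^ 2 + t := by linarith
  rw [div_sub_div _ _ hxs.ne' hxt.ne', abs_div, abs_of_pos (mul_pos hxs hxt),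
    div_le_div_iff₀ (mul_pos hxs hxt) hx2]
  have h1 : x ^ 2 * (x ^ 2 + t) - (x ^ 2 + s) * x ^ 2 = x ^ 2 * (t - s) := by ring
  rw [h1, abs_mul, abs_of_pos hx2, abs_sub_comm t s]
  have key : 0 ≤ |s - t| * (x ^ 2 * s + x ^ 2 * t + s * t) :=
    mul_nonneg (abs_nonneg _) (by positivity)
  nlinarith [key]

private lemma poisson_mean_real (r : ℝ≥0) :
    HasSum (fun n : ℕ => (n : ℝ) * poissonPMFReal r n) r := by
  have h := (poissonPMFRealSum r).mul_left (r : ℝ)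
  rw [mul_one] at h
  have key : (fun n : ℕ => ((n + 1 : ℕ) : ℝ) * poissonPMFReal r (n + 1))
      = fun n : ℕ => (r : ℝ) * poissonPMFReal r n := by
    funext n
    simp only [poissonPMFReal, Nat.factorial_succ]
    have hn : (n ! : ℝ) ≠ 0 := by positivity
    push_cast
    field_simp
    ring
  have h2 : HasSum (fun n : ℕ => ((n + 1 : ℕ) : ℝ) * poissonPMFReal r (n + 1)) r := by
    rw [key]; exact h
  have h3 := (hasSum_nat_add_iff (f := fun n : ℕ => (n : ℝ) * poissonPMFReal r n) 1).1 h2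
  simpa using h3

private lemma poisson_mean_ennreal (r : ℝ≥0) :
    ∑' n : ℕ, (n : ℝ≥0∞) * poissonPMF r n = ENNReal.ofReal r := by
  have hpmf : ∀ n : ℕ, poissonPMF r n = ENNReal.ofReal (poissonPMFReal r n) := fun n => rfl
  have hnn : ∀ n : ℕ, 0 ≤ (n : ℝ) * poissonPMFReal r n :=
    fun n => mul_nonneg (Nat.cast_nonneg n) poissonPMFReal_nonneg
  calc ∑' n : ℕ, (n : ℝ≥0∞) * poissonPMF r n
      = ∑' n : ℕ, ENNReal.ofReal ((n : ℝ) * poissonPMFReal r n) := by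
        congr 1; funext n
        rw [hpmf, ← ENNReal.ofReal_natCast n, ← ENNReal.ofReal_mul (Nat.cast_nonneg n)]
    _ = ENNReal.ofReal (∑' n : ℕ, (n : ℝ) * poissonPMFReal r n) :=
        (ENNReal.ofReal_tsum_of_nonneg hnn (poisson_mean_real r).summable).symm
    _ = ENNReal.ofReal r := by rw [(poisson_mean_real r).tsum_eq]

/-- contraction estimate for the distributional fixed point equation
on the Poisson(c) Galton–Watson tree, for monomer activity `x > √c`:
`E|M_even − M_odd| ≤ (c²/x⁴) E|M_even − M_odd|`, hence `M_even = M_odd` a.s. -/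
theorem fixed_point_contraction {Ω : Type*} [MeasurableSpace Ω] (μ : Measure Ω)
    [IsProbabilityMeasure μ] (c x : ℝ) (hc : 0 < c) (hx : Real.sqrt c < x)
    (Me Mo : Ω → ℝ) (hMe : Measurable Me) (hMo : Measurable Mo)
    (hrange : ∀ᵐ ω ∂μ, Me ω ∈ Set.Icc (0:ℝ) 1 ∧ Mo ω ∈ Set.Icc (0:ℝ) 1)
    (pairs : ℕ → Ω → ℝ × ℝ) (hpairsm : ∀ i, Measurable (pairs i))
    (hpairsrange : ∀ i, ∀ᵐ ω ∂μ, (pairs i ω).1 ∈ Set.Icc (0:ℝ) 1 ∧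
      (pairs i ω).2 ∈ Set.Icc (0:ℝ) 1)
    (hindep : iIndepFun pairs μ)
    (hcopies : ∀ i, μ.map (pairs i) = μ.map (fun ω => (Me ω, Mo ω)))
    (Δ : Ω → ℕ) (hΔm : Measurable Δ)
    (hpois : μ.map Δ = poissonMeasure (Real.toNNReal c))
    (hΔindep : IndepFun Δ (fun ω => (fun i => pairs i ω)) μ)
    (hfix : μ.map (fun ω => (Me ω, Mo ω))
      = μ.map (fun ω =>
          (x ^ 2 / (x ^ 2 + ∑ i ∈ Finset.range (Δ ω), (pairs i ω).2),
           x ^ 2 / (x ^ 2 + ∑ i ∈ Finset.range (Δ ω), (pairs i ω).1)))) :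
    (∫ ω, |Me ω - Mo ω| ∂μ ≤ c ^ 2 / x ^ 4 * ∫ ω, |Me ω - Mo ω| ∂μ) ∧
      ∀ᵐ ω ∂μ, Me ω = Mo ω := by
  have hx0 : 0 < x := (Real.sqrt_nonneg c).trans_lt hx
  have hcx : c < x ^ 2 := by
    nlinarith [Real.sq_sqrt hc.le, Real.sqrt_nonneg c]
  -- abbreviations
  set S1 : Ω → ℝ := fun ω => ∑ i ∈ Finset.range (Δ ω), (pairs i ω).1 with hS1def
  set S2 : Ω → ℝ := fun ω => ∑ i ∈ Finset.range (Δ ω), (pairs i ω).2 with hS2def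
  have hS1m : Measurable S1 := by
    have hn : ∀ n : ℕ, Measurable fun ω => ∑ i ∈ Finset.range n, (pairs i ω).1 := fun n =>
      Finset.measurable_sum _ fun i _ => measurable_fst.comp (hpairsm i)
    have : Measurable fun p : Ω × ℕ => ∑ i ∈ Finset.range p.2, (pairs i p.1).1 :=
      measurable_from_prod_countable_left fun n => hn n
    exact this.comp (measurable_id.prodMk hΔm)
  have hS2m : Measurable S2 := by
    have hn : ∀ n : ℕ, Measurable fun ω => ∑ i ∈ Finset.range n, (pairs i ω).2 := fun n =>
      Finset.measurable_sum _ fun i _ => measurable_snd.comp (hpairsm i)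
    have : Measurable fun p : Ω × ℕ => ∑ i ∈ Finset.range p.2, (pairs i p.1).2 :=
      measurable_from_prod_countable_left fun n => hn n
    exact this.comp (measurable_id.prodMk hΔm)
  set L : ℝ≥0∞ := ∫⁻ ω, ENNReal.ofReal |Me ω - Mo ω| ∂μ with hLdef
  have habsm : Measurable fun p : ℝ × ℝ => ENNReal.ofReal |p.1 - p.2| :=
    ENNReal.measurable_ofReal.comp (measurable_fst.sub measurable_snd).abs
  have hFm : Measurable fun ω => (x ^ 2 / (x ^ 2 + S2 ω), x ^ 2 / (x ^ 2 + S1 ω)) :=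
    (measurable_const.div (measurable_const.add hS2m)).prodMk
      (measurable_const.div (measurable_const.add hS1m))
  -- Step 1: rewrite L via the fixed point equation
  have h1 : L = ∫⁻ ω, ENNReal.ofReal |x ^ 2 / (x ^ 2 + S2 ω) - x ^ 2 / (x ^ 2 + S1 ω)| ∂μ := by
    have e1 : L = ∫⁻ p, ENNReal.ofReal |p.1 - p.2| ∂(μ.map fun ω => (Me ω, Mo ω)) := by
      rw [lintegral_map habsm (hMe.prodMk hMo)]
    rw [e1, hfix, lintegral_map habsm hFm]
  -- the summands
  set D : ℕ → Ω → ℝ≥0∞ := fun i ω => ENNReal.ofReal |(pairs i ω).1 - (pairs i ω).2| with hDdef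
  have hDm : ∀ i, Measurable (D i) := fun i =>
    ENNReal.measurable_ofReal.comp
      ((measurable_fst.comp (hpairsm i)).sub (measurable_snd.comp (hpairsm i))).abs
  have hGm : Measurable fun ω => ∑ i ∈ Finset.range (Δ ω), D i ω := by
    have hn : ∀ n : ℕ, Measurable fun ω => ∑ i ∈ Finset.range n, D i ω := fun n =>
      Finset.measurable_sum _ fun i _ => hDm i
    have : Measurable fun p : Ω × ℕ => ∑ i ∈ Finset.range p.2, D i p.1 :=
      measurable_from_prod_countable_left fun n => hn n
    exact this.comp (measurable_id.prodMk hΔm)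
  -- Step 2: pointwise contraction bound
  have h2 : L ≤ ENNReal.ofReal (x ^ 2)⁻¹ * ∫⁻ ω, ∑ i ∈ Finset.range (Δ ω), D i ω ∂μ := by
    rw [h1, ← lintegral_const_mul _ hGm]
    refine lintegral_mono_ae ?_
    filter_upwards [ae_all_iff.2 hpairsrange] with ω hω
    have hS1nn : 0 ≤ S1 ω := Finset.sum_nonneg fun i _ => (hω i).1.1
    have hS2nn : 0 ≤ S2 ω := Finset.sum_nonneg fun i _ => (hω i).2.1
    have hb1 : |x ^ 2 / (x ^ 2 + S2 ω) - x ^ 2 / (x ^ 2 + S1 ω)| ≤ |S2 ω - S1 ω| / x ^ 2 :=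
      contraction_abs x (S2 ω) (S1 ω) hx0 hS2nn hS1nn
    have hb2 : |S2 ω - S1 ω| ≤ ∑ i ∈ Finset.range (Δ ω), |(pairs i ω).1 - (pairs i ω).2| := by
      rw [hS1def, hS2def]
      simp only
      rw [← Finset.sum_sub_distrib]
      refine (Finset.abs_sum_le_sum_abs _ _).trans_eq ?_
      exact Finset.sum_congr rfl fun i _ => abs_sub_comm _ _
    have hx2 : (0:ℝ) < x ^ 2 := by positivity
    calc ENNReal.ofReal |x ^ 2 / (x ^ 2 + S2 ω) - x ^ 2 / (x ^ 2 + S1 ω)|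
        ≤ ENNReal.ofReal
          ((x ^ 2)⁻¹ * ∑ i ∈ Finset.range (Δ ω), |(pairs i ω).1 - (pairs i ω).2|) := by
          refine ENNReal.ofReal_le_ofReal (hb1.trans ?_)
          rw [div_eq_inv_mul]
          exact mul_le_mul_of_nonneg_left hb2 (by positivity)
      _ = ENNReal.ofReal (x ^ 2)⁻¹ * ∑ i ∈ Finset.range (Δ ω), D i ω := by
          rw [ENNReal.ofReal_mul (by positivity),
            ENNReal.ofReal_sum_of_nonneg fun i _ => abs_nonneg _]
  -- Step 3: Wald / swap sum and integral
  have hIoi : ∀ i : ℕ, MeasurableSet {ω | i < Δ ω} := fun i =>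
    hΔm measurableSet_Ioi
  have h3 : ∫⁻ ω, ∑ i ∈ Finset.range (Δ ω), D i ω ∂μ
      = ∑' i : ℕ, ∫⁻ ω, ({ω' | i < Δ ω'}.indicator (D i)) ω ∂μ := by
    rw [← lintegral_tsum fun i => ((hDm i).indicator (hIoi i)).aemeasurable]
    congr 1; funext ω
    rw [tsum_eq_sum (s := Finset.range (Δ ω))
      (fun i hi => Set.indicator_of_notMem (by simpa using hi) _)]
    exact (Finset.sum_congr rfl fun i hi =>
      Set.indicator_of_mem (by simpa using hi) _).symm
  -- Step 4: independence factorization of each summand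
  have h4 : ∀ i : ℕ, ∫⁻ ω, ({ω' | i < Δ ω'}.indicator (D i)) ω ∂μ
      = μ {ω | i < Δ ω} * L := by
    intro i
    set A : Ω → ℝ≥0∞ := fun ω => ({n : ℕ | i < n}.indicator (fun _ => (1:ℝ≥0∞)) (Δ ω)) with hAdef
    have hAm : Measurable A :=
      (measurable_of_countable ({n : ℕ | i < n}.indicator fun _ => (1:ℝ≥0∞))).comp hΔm
    have hindepAB : IndepFun A (D i) μ := by
      have hφ : Measurable fun n : ℕ => {n' : ℕ | i < n'}.indicator (fun _ => (1:ℝ≥0∞)) n :=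
        measurable_of_countable _
      have hψ : Measurable fun f : ℕ → ℝ × ℝ => ENNReal.ofReal |(f i).1 - (f i).2| :=
        ENNReal.measurable_ofReal.comp
          ((measurable_fst.comp (measurable_pi_apply i)).sub
            (measurable_snd.comp (measurable_pi_apply i))).abs
      exact hΔindep.comp hφ hψ
    have hprod : (fun ω => ({ω' | i < Δ ω'}.indicator (D i)) ω) = A * D i := by
      funext ω
      by_cases h : i < Δ ω <;> simp [hAdef, Set.indicator, h]
    have hAint : ∫⁻ ω, A ω ∂μ = μ {ω | i < Δ ω} := by
      have : A = {ω | i < Δ ω}.indicator fun _ => (1:ℝ≥0∞) := by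
        funext ω; by_cases h : i < Δ ω <;> simp [hAdef, Set.indicator, h]
      rw [this, lintegral_indicator_const (hIoi i), one_mul]
    have hDint : ∫⁻ ω, D i ω ∂μ = L := by
      have e1 : ∫⁻ ω, D i ω ∂μ = ∫⁻ p, ENNReal.ofReal |p.1 - p.2| ∂(μ.map (pairs i)) := by
        rw [lintegral_map habsm (hpairsm i)]
      rw [e1, hcopies i, lintegral_map habsm (hMe.prodMk hMo)]
    calc ∫⁻ ω, ({ω' | i < Δ ω'}.indicator (D i)) ω ∂μ
        = ∫⁻ ω, (A * D i) ω ∂μ := by rw [hprod]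
      _ = (∫⁻ ω, A ω ∂μ) * ∫⁻ ω, D i ω ∂μ :=
          lintegral_mul_eq_lintegral_mul_lintegral_of_indepFun hAm (hDm i) hindepAB
      _ = μ {ω | i < Δ ω} * L := by rw [hAint, hDint]
  -- Step 5: Poisson mean
  have h5 : ∑' i : ℕ, μ {ω | i < Δ ω} = ENNReal.ofReal c := by
    have hmap : ∀ i : ℕ, μ {ω | i < Δ ω} = poissonMeasure (Real.toNNReal c) (Set.Ioi i) := by
      intro i
      rw [← hpois, Measure.map_apply hΔm measurableSet_Ioi]
      rfl
    have happly : ∀ i : ℕ, poissonMeasure (Real.toNNReal c) (Set.Ioi i)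
        = ∑' n : ℕ, (Set.Ioi i).indicator (poissonPMF (Real.toNNReal c)) n := fun i => by
      rw [poissonMeasure, Measure.sum_apply _ measurableSet_Ioi]
      refine tsum_congr fun n => ?_
      rw [Measure.smul_apply, Measure.dirac_apply' _ measurableSet_Ioi, smul_eq_mul]
      by_cases h : n ∈ Set.Ioi i
      · rw [Set.indicator_of_mem h, Set.indicator_of_mem h,
          ← poissonPMFReal_ofReal_eq_poissonPMF, poissonPMFReal, Pi.one_apply, mul_one]
      · rw [Set.indicator_of_notMem h, Set.indicator_of_notMem h, mul_zero]
    calc ∑' i : ℕ, μ {ω | i < Δ ω}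
        = ∑' i : ℕ, ∑' n : ℕ, (Set.Ioi i).indicator (poissonPMF (Real.toNNReal c)) n := by
          simp_rw [hmap, happly]
      _ = ∑' n : ℕ, ∑' i : ℕ, (Set.Ioi i).indicator (poissonPMF (Real.toNNReal c)) n :=
          ENNReal.tsum_comm
      _ = ∑' n : ℕ, (n : ℝ≥0∞) * poissonPMF (Real.toNNReal c) n := by
          congr 1; funext n
          rw [tsum_eq_sum (s := Finset.range n)
            (fun i hi => Set.indicator_of_notMem (by simpa using hi) _)]
          rw [Finset.sum_congr rfl fun i hi =>
            Set.indicator_of_mem (by simpa using hi) _]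
          simp [Finset.sum_const, nsmul_eq_mul]
      _ = ENNReal.ofReal (Real.toNNReal c : ℝ) := poisson_mean_ennreal _
      _ = ENNReal.ofReal c := by rw [Real.coe_toNNReal c hc.le]
  -- combine: L ≤ ofReal ((x^2)⁻¹ * c) * L
  have hmain : L ≤ ENNReal.ofReal ((x ^ 2)⁻¹ * c) * L := by
    calc L ≤ ENNReal.ofReal (x ^ 2)⁻¹ * ∫⁻ ω, ∑ i ∈ Finset.range (Δ ω), D i ω ∂μ := h2
      _ = ENNReal.ofReal (x ^ 2)⁻¹ * ∑' i : ℕ, μ {ω | i < Δ ω} * L := by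
          rw [h3]; congr 1; exact tsum_congr h4
      _ = ENNReal.ofReal (x ^ 2)⁻¹ * (ENNReal.ofReal c * L) := by
          rw [ENNReal.tsum_mul_right, h5]
      _ = ENNReal.ofReal ((x ^ 2)⁻¹ * c) * L := by
          rw [ENNReal.ofReal_mul (by positivity), mul_assoc]
  -- L is finite
  have hLle : L ≤ 1 := by
    have : L ≤ ∫⁻ _, (1:ℝ≥0∞) ∂μ := by
      refine lintegral_mono_ae ?_
      filter_upwards [hrange] with ω hω
      rw [show (1:ℝ≥0∞) = ENNReal.ofReal 1 by simp]
      refine ENNReal.ofReal_le_ofReal (abs_le.2 ⟨?_, ?_⟩) <;>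
        [linarith [hω.1.1, hω.2.2]; linarith [hω.1.2, hω.2.1]]
    simpa using this
  have hLzero : L = 0 := by
    by_contra hne
    have hk : ENNReal.ofReal ((x ^ 2)⁻¹ * c) < 1 := by
      rw [ENNReal.ofReal_lt_one]
      rw [inv_mul_lt_iff₀ (by positivity : (0:ℝ) < x ^ 2)]
      linarith
    have hLtop : L ≠ ⊤ := (hLle.trans_lt (by norm_num)).ne
    have : L < L := by
      calc L ≤ ENNReal.ofReal ((x ^ 2)⁻¹ * c) * L := hmain
        _ < 1 * L := by
            exact ENNReal.mul_lt_mul_left hne hLtop hk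
        _ = L := one_mul L
    exact absurd this (lt_irrefl L)
  -- conclude
  have haeeq : ∀ᵐ ω ∂μ, Me ω = Mo ω := by
    have hm : Measurable fun ω => ENNReal.ofReal |Me ω - Mo ω| :=
      ENNReal.measurable_ofReal.comp (hMe.sub hMo).abs
    have h0 := (lintegral_eq_zero_iff hm).1 hLzero
    filter_upwards [h0] with ω hω
    have h1 : ENNReal.ofReal |Me ω - Mo ω| = 0 := hω
    have h2 : |Me ω - Mo ω| ≤ 0 := ENNReal.ofReal_eq_zero.1 h1
    have h3 : |Me ω - Mo ω| = 0 := le_antisymm h2 (abs_nonneg _)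
    have h4 := sub_eq_zero.1 (abs_eq_zero.1 h3)
    exact h4
  have hint0 : ∫ ω, |Me ω - Mo ω| ∂μ = 0 := by
    refine integral_eq_zero_of_ae ?_
    filter_upwards [haeeq] with ω hω
    simp [hω]
  refine ⟨?_, haeeq⟩
  rw [hint0, mul_zero]
end
end

section
/- Mean-field pure monomer-dimer partition function as a one-dimensional Gaussian integral: on the complete graph with N vertices, uniform dimer activity w/N and monomer activities x_i > 0, the partition function satisfies Z_N = √(N/(2πw)) ∫_ℝ exp(−N ξ²/(2w)) Π_{i=1}^N (ξ + x_i) dξ. -/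
open scoped BigOperators
open MeasureTheory Filter Finset

attribute [local instance] Classical.propDecidable

noncomputable section

variable {V : Type*} [Fintype V] [DecidableEq V]

/-! ### Auxiliary analytic lemmas: Gaussian moments -/

/-- `∫ x^k exp(-b x²)`. -/
def gmom (b : ℝ) (k : ℕ) : ℝ := ∫ x : ℝ, x ^ k * Real.exp (-b * x ^ 2)

lemma integrable_pow_gauss {b : ℝ} (hb : 0 < b) (k : ℕ) :
    Integrable (fun x : ℝ => x ^ k * Real.exp (-b * x ^ 2)) := by
  have h := integrable_rpow_mul_exp_neg_mul_sq hb (s := (k : ℝ))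
    (by have : (0:ℝ) ≤ k := Nat.cast_nonneg k; linarith)
  simpa [Real.rpow_natCast] using h

lemma gmom_zero {b : ℝ} (hb : 0 < b) : gmom b 0 = Real.sqrt (Real.pi / b) := by
  simpa [gmom] using integral_gaussian b

lemma gmom_one (b : ℝ) : gmom b 1 = 0 := by
  have h : (∫ x : ℝ, (-x) ^ 1 * Real.exp (-b * (-x) ^ 2))
      = ∫ x : ℝ, x ^ 1 * Real.exp (-b * x ^ 2) := by
    have hmp := (Measure.measurePreserving_neg (volume : Measure ℝ)).integral_comp
      (Homeomorph.neg ℝ).measurableEmbedding (fun x : ℝ => x ^ 1 * Real.exp (-b * x ^ 2))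
    simpa using hmp
  have h2 : ∫ x : ℝ, (-x) ^ 1 * Real.exp (-b * (-x) ^ 2)
      = - ∫ x : ℝ, x ^ 1 * Real.exp (-b * x ^ 2) := by
    rw [← integral_neg]
    congr 1
    funext x
    ring_nf
  rw [gmom]
  have := h.symm.trans h2
  linarith

lemma gmom_rec {b : ℝ} (hb : 0 < b) (k : ℕ) :
    gmom b (k + 2) = (((k : ℝ) + 1) / (2 * b)) * gmom b k := by
  have hu : ∀ x : ℝ, HasDerivAt (fun y : ℝ => y ^ (k + 1)) (((k : ℝ) + 1) * x ^ k) x := by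
    intro x
    have := hasDerivAt_pow (k + 1) x
    simpa [Nat.cast_add] using this
  have hv : ∀ x : ℝ, HasDerivAt (fun y : ℝ => -(1 / (2 * b)) * Real.exp (-b * y ^ 2))
      (x * Real.exp (-b * x ^ 2)) x := by
    intro x
    have h1 : HasDerivAt (fun y : ℝ => -b * y ^ 2) (-b * (2 * x)) x := by
      have := (hasDerivAt_pow 2 x).const_mul (-b)
      simpa using this
    have h2 := (h1.exp).const_mul (-(1 / (2 * b)))
    refine h2.congr_deriv ?_
    field_simp [hb.ne']
  have huv' : Integrable ((fun y : ℝ => y ^ (k + 1)) *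
      (fun x : ℝ => x * Real.exp (-b * x ^ 2))) := by
    have heq : ((fun y : ℝ => y ^ (k + 1)) * (fun x : ℝ => x * Real.exp (-b * x ^ 2)))
        = fun x : ℝ => x ^ (k + 2) * Real.exp (-b * x ^ 2) := by
      funext x; simp only [Pi.mul_apply]; ring
    rw [heq]; exact integrable_pow_gauss hb (k + 2)
  have hu'v : Integrable ((fun x : ℝ => ((k : ℝ) + 1) * x ^ k) *
      (fun y : ℝ => -(1 / (2 * b)) * Real.exp (-b * y ^ 2))) := by
    have heq : ((fun x : ℝ => ((k : ℝ) + 1) * x ^ k) *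
        (fun y : ℝ => -(1 / (2 * b)) * Real.exp (-b * y ^ 2)))
        = fun x : ℝ => (((k : ℝ) + 1) * (-(1 / (2 * b)))) * (x ^ k * Real.exp (-b * x ^ 2)) := by
      funext x; simp only [Pi.mul_apply]; ring
    rw [heq]; exact (integrable_pow_gauss hb k).const_mul _
  have huv : Integrable ((fun y : ℝ => y ^ (k + 1)) *
      (fun y : ℝ => -(1 / (2 * b)) * Real.exp (-b * y ^ 2))) := by
    have heq : ((fun y : ℝ => y ^ (k + 1)) * (fun y : ℝ => -(1 / (2 * b)) * Real.exp (-b * y ^ 2)))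
        = fun x : ℝ => (-(1 / (2 * b))) * (x ^ (k + 1) * Real.exp (-b * x ^ 2)) := by
      funext x; simp only [Pi.mul_apply]; ring
    rw [heq]; exact (integrable_pow_gauss hb (k + 1)).const_mul _
  have key := integral_mul_deriv_eq_deriv_mul_of_integrable (fun x _ => hu x) (fun x _ => hv x) huv' hu'v huv
  have e1 : ∫ x : ℝ, x ^ (k + 1) * (x * Real.exp (-b * x ^ 2)) = gmom b (k + 2) := by
    rw [gmom]; congr 1; funext x; ring
  have e2 : ∫ x : ℝ, (((k : ℝ) + 1) * x ^ k) * (-(1 / (2 * b)) * Real.exp (-b * x ^ 2))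
      = (((k : ℝ) + 1) * (-(1 / (2 * b)))) * gmom b k := by
    rw [gmom, ← integral_const_mul]; congr 1; funext x; ring
  rw [e1, e2] at key
  rw [key]; ring

/-- Normalized Gaussian moment. -/
def nmom (b : ℝ) (k : ℕ) : ℝ := Real.sqrt (b / Real.pi) * gmom b k

lemma nmom_zero {b : ℝ} (hb : 0 < b) : nmom b 0 = 1 := by
  rw [nmom, gmom_zero hb, ← Real.sqrt_mul (by positivity)]
  rw [show b / Real.pi * (Real.pi / b) = 1 by
    field_simp]
  exact Real.sqrt_one

lemma nmom_one (b : ℝ) : nmom b 1 = 0 := by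
  rw [nmom, gmom_one, mul_zero]

lemma nmom_rec {b : ℝ} (hb : 0 < b) (k : ℕ) :
    nmom b (k + 2) = (1 / (2 * b)) * ((k : ℝ) + 1) * nmom b k := by
  rw [nmom, gmom_rec hb, nmom]; ring

/-! ### Auxiliary combinatorial lemmas -/

/-- Matchings in the complete graph that cover exactly the vertex set `T`. -/
def exactCover (T : Finset V) : Finset (Finset (Sym2 V)) :=
  (matchingsIn (completeEdges V)).filter (fun D => uncovered D = Finset.univ \ T)

lemma mem_exactCover {T : Finset V} {D : Finset (Sym2 V)} :
    D ∈ exactCover T ↔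
      (∀ e ∈ D, ¬ e.IsDiag) ∧
      (∀ e ∈ D, ∀ f ∈ D, e ≠ f → ∀ v : V, ¬(v ∈ e ∧ v ∈ f)) ∧
      (∀ a : V, a ∈ T ↔ ∃ e ∈ D, a ∈ e) := by
  constructor
  · intro h
    rw [exactCover, Finset.mem_filter] at h
    obtain ⟨hm, hcov⟩ := h
    rw [matchingsIn, Finset.mem_filter] at hm
    obtain ⟨-, -, hdiag, hdisj⟩ := hm
    refine ⟨hdiag, hdisj, fun a => ?_⟩
    have hca : a ∈ uncovered D ↔ a ∈ Finset.univ \ T := by rw [hcov]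
    rw [uncovered, Finset.mem_filter, Finset.mem_sdiff] at hca
    simp only [Finset.mem_univ, true_and] at hca
    constructor
    · intro haT
      by_contra hne
      push_neg at hne
      exact (hca.mp hne) haT
    · rintro ⟨e, heD, hae⟩
      by_contra haT
      exact (hca.mpr haT) e heD hae
  · rintro ⟨hdiag, hdisj, hcov⟩
    rw [exactCover, Finset.mem_filter, matchingsIn, Finset.mem_filter, Finset.mem_powerset]
    have hsub : D ⊆ completeEdges V := by
      intro e he
      rw [completeEdges, Finset.mem_filter]
      exact ⟨Finset.mem_univ e, hdiag e he⟩
    refine ⟨⟨hsub, hsub, hdiag, hdisj⟩, ?_⟩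
    ext a
    rw [uncovered, Finset.mem_filter, Finset.mem_sdiff]
    simp only [Finset.mem_univ, true_and]
    constructor
    · intro hne haT
      obtain ⟨e, heD, hae⟩ := (hcov a).mp haT
      exact hne e heD hae
    · intro haT e heD hae
      exact haT ((hcov a).mpr ⟨e, heD, hae⟩)

lemma exactCover_empty : exactCover (∅ : Finset V) = {∅} := by
  ext D
  rw [mem_exactCover, Finset.mem_singleton]
  constructor
  · rintro ⟨_, _, hcov⟩
    rw [Finset.eq_empty_iff_forall_notMem]
    intro e heD
    induction e using Sym2.ind with
    | _ a b =>
      have : a ∈ (∅ : Finset V) := (hcov a).mpr ⟨s(a, b), heD, by simp⟩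
      simp at this
  · rintro rfl
    refine ⟨by simp, by simp, fun a => ?_⟩
    simp

lemma exactCover_rec {T : Finset V} {v : V} (hv : v ∈ T) (c : ℝ) :
    ∑ D ∈ exactCover T, c ^ D.card
      = c * ∑ u ∈ T.erase v, ∑ D ∈ exactCover ((T.erase v).erase u), c ^ D.card := by
  rw [Finset.mul_sum]
  have step : ∀ u ∈ T.erase v,
      c * ∑ D ∈ exactCover ((T.erase v).erase u), c ^ D.card
        = ∑ D ∈ exactCover ((T.erase v).erase u), c ^ (D.card + 1) := by
    intro u _
    rw [Finset.mul_sum]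
    refine Finset.sum_congr rfl fun D _ => ?_
    rw [pow_succ]; ring
  rw [Finset.sum_congr rfl step, Finset.sum_sigma']
  symm
  refine Finset.sum_nbij (i := fun p => insert s(v, p.1) p.2) ?_ ?_ ?_ ?_
  · -- maps to
    rintro ⟨u, D⟩ hp
    simp only [Finset.mem_sigma] at hp
    obtain ⟨hu, hD⟩ := hp
    have huv : u ≠ v := Finset.ne_of_mem_erase hu
    have huT : u ∈ T := Finset.mem_of_mem_erase hu
    rw [mem_exactCover] at hD ⊢
    obtain ⟨hdiag, hdisj, hcov⟩ := hD
    have hnotv : ∀ a : V, (∃ e ∈ D, a ∈ e) → a ≠ v ∧ a ≠ u := by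
      intro a ha
      have h := (hcov a).mpr ha
      rw [Finset.mem_erase, Finset.mem_erase] at h
      exact ⟨h.2.1, h.1⟩
    refine ⟨?_, ?_, ?_⟩
    · intro e he
      rcases Finset.mem_insert.mp he with rfl | he'
      · rw [Sym2.mk_isDiag_iff]
        exact fun h => huv h.symm
      · exact hdiag e he'
    · intro e he f hf hef a
      rcases Finset.mem_insert.mp he with rfl | he' <;>
        rcases Finset.mem_insert.mp hf with rfl | hf'
      · exact absurd rfl hef
      · rintro ⟨hae, haf⟩
        rcases Sym2.mem_iff.mp hae with rfl | rfl
        · exact (hnotv a ⟨f, hf', haf⟩).1 rfl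
        · exact (hnotv a ⟨f, hf', haf⟩).2 rfl
      · rintro ⟨hae, haf⟩
        rcases Sym2.mem_iff.mp haf with rfl | rfl
        · exact (hnotv a ⟨e, he', hae⟩).1 rfl
        · exact (hnotv a ⟨e, he', hae⟩).2 rfl
      · exact hdisj e he' f hf' hef a
    · intro a
      constructor
      · intro haT
        by_cases hav : a = v
        · exact ⟨s(v, u), Finset.mem_insert_self _ _, by simp [hav]⟩
        · by_cases hau : a = u
          · exact ⟨s(v, u), Finset.mem_insert_self _ _, by simp [hau]⟩
          · obtain ⟨e, he, hae⟩ := (hcov a).mp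
              (Finset.mem_erase.mpr ⟨hau, Finset.mem_erase.mpr ⟨hav, haT⟩⟩)
            exact ⟨e, Finset.mem_insert_of_mem he, hae⟩
      · rintro ⟨e, he, hae⟩
        rcases Finset.mem_insert.mp he with rfl | he'
        · rcases Sym2.mem_iff.mp hae with rfl | rfl
          · exact hv
          · exact huT
        · exact Finset.mem_of_mem_erase (Finset.mem_of_mem_erase ((hcov a).mpr ⟨e, he', hae⟩))
  · -- injective
    rintro ⟨u, D⟩ hp ⟨u', D'⟩ hp' heq
    simp only [Finset.mem_coe, Finset.mem_sigma] at hp hp'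
    obtain ⟨hu, hD⟩ := hp
    obtain ⟨hu', hD'⟩ := hp'
    rw [mem_exactCover] at hD hD'
    simp only at heq
    have hvD : ∀ e ∈ D, v ∉ e := by
      intro e he hvmem
      have h := (hD.2.2 v).mpr ⟨e, he, hvmem⟩
      simp [Finset.mem_erase] at h
    have hvD' : ∀ e ∈ D', v ∉ e := by
      intro e he hvmem
      have h := (hD'.2.2 v).mpr ⟨e, he, hvmem⟩
      simp [Finset.mem_erase] at h
    have hmem : s(v, u') ∈ insert s(v, u) D := by
      rw [heq]; exact Finset.mem_insert_self _ _
    have huu' : u' = u := by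
      rcases Finset.mem_insert.mp hmem with h | h
      · exact Sym2.congr_right.mp h
      · exact absurd (Sym2.mem_iff.mpr (Or.inl rfl)) (hvD _ h)
    subst huu'
    have hnD : s(v, u') ∉ D := fun h => hvD _ h (Sym2.mem_iff.mpr (Or.inl rfl))
    have hnD' : s(v, u') ∉ D' := fun h => hvD' _ h (Sym2.mem_iff.mpr (Or.inl rfl))
    have hDD' : D = D' := by
      have h := congrArg (fun S => Finset.erase S s(v, u')) heq
      simpa [Finset.erase_insert hnD, Finset.erase_insert hnD'] using h
    subst hDD'
    rfl
  · -- surjective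
    intro D hD
    simp only [Finset.mem_coe] at hD
    rw [mem_exactCover] at hD
    obtain ⟨hdiag, hdisj, hcov⟩ := hD
    obtain ⟨e, heD, hve⟩ := (hcov v).mp hv
    set u := Sym2.Mem.other hve with hu_def
    have hevu : s(v, u) = e := Sym2.other_spec hve
    have huv : u ≠ v := by
      intro h
      apply hdiag e heD
      rw [← hevu, h]
      exact Sym2.mk_isDiag_iff.mpr rfl
    have huT : u ∈ T := (hcov u).mpr ⟨e, heD, by rw [← hevu]; exact Sym2.mem_iff.mpr (Or.inr rfl)⟩
    refine ⟨⟨u, D.erase e⟩, ?_, ?_⟩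
    · simp only [Finset.mem_coe, Finset.mem_sigma]
      refine ⟨Finset.mem_erase.mpr ⟨huv, huT⟩, ?_⟩
      rw [mem_exactCover]
      refine ⟨fun f hf => hdiag f (Finset.mem_of_mem_erase hf),
        fun f hf g hg => hdisj f (Finset.mem_of_mem_erase hf) g (Finset.mem_of_mem_erase hg),
        fun a => ?_⟩
      constructor
      · intro ha
        rw [Finset.mem_erase, Finset.mem_erase] at ha
        obtain ⟨hau, hav, haT⟩ := ha
        obtain ⟨f, hfD, haf⟩ := (hcov a).mp haT
        refine ⟨f, Finset.mem_erase.mpr ⟨?_, hfD⟩, haf⟩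
        rintro rfl
        rw [← hevu] at haf
        rcases Sym2.mem_iff.mp haf with rfl | rfl
        · exact hav rfl
        · exact hau rfl
      · rintro ⟨f, hf, haf⟩
        have hfD := Finset.mem_of_mem_erase hf
        have hfe : f ≠ e := (Finset.mem_erase.mp hf).1
        have haT : a ∈ T := (hcov a).mpr ⟨f, hfD, haf⟩
        refine Finset.mem_erase.mpr ⟨?_, Finset.mem_erase.mpr ⟨?_, haT⟩⟩
        · rintro rfl
          exact hdisj f hfD e heD hfe u
            ⟨haf, by rw [← hevu]; exact Sym2.mem_iff.mpr (Or.inr rfl)⟩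
        · intro h
          exact hdisj f hfD e heD hfe a ⟨haf, by rw [h]; exact hve⟩
    · simp only
      rw [hevu, Finset.insert_erase heD]
  · -- values
    rintro ⟨u, D⟩ hp
    simp only [Finset.mem_sigma] at hp
    obtain ⟨hu, hD⟩ := hp
    rw [mem_exactCover] at hD
    have hnot : s(v, u) ∉ D := by
      intro h
      have h2 := (hD.2.2 v).mpr ⟨_, h, Sym2.mem_iff.mpr (Or.inl rfl)⟩
      simp [Finset.mem_erase] at h2
    simp [Finset.card_insert_of_notMem hnot]

lemma exactCover_sum_eq (c : ℝ) (μ : ℕ → ℝ) (h0 : μ 0 = 1) (h1 : μ 1 = 0)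
    (hrec : ∀ k : ℕ, μ (k + 2) = c * ((k : ℝ) + 1) * μ k) (T : Finset V) :
    ∑ D ∈ exactCover T, c ^ D.card = μ T.card := by
  induction T using Finset.strongInduction with
  | _ T ih =>
    rcases Finset.eq_empty_or_nonempty T with rfl | ⟨v, hv⟩
    · simp [exactCover_empty, h0]
    · rw [exactCover_rec hv c]
      rcases Finset.eq_empty_or_nonempty (T.erase v) with he | ⟨u0, hu0⟩
      · have hT1 : T.card = 1 := by
          have hTv : T = {v} := by
            apply Finset.eq_singleton_iff_unique_mem.mpr
            refine ⟨hv, fun a ha => ?_⟩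
            by_contra hav
            exact absurd (Finset.mem_erase.mpr ⟨hav, ha⟩) (by simp [he])
          simp [hTv]
        rw [he, hT1]
        simp [h1]
      · have h2 : 2 ≤ T.card := by
          have h1' := Finset.card_erase_of_mem hv
          have hpos : 0 < (T.erase v).card := Finset.card_pos.mpr ⟨u0, hu0⟩
          omega
        obtain ⟨m, hm⟩ : ∃ m, T.card = m + 2 := ⟨T.card - 2, by omega⟩
        have hsum : ∀ u ∈ T.erase v,
            ∑ D ∈ exactCover ((T.erase v).erase u), c ^ D.card = μ m := by
          intro u hu
          rw [ih _ (Finset.ssubset_of_subset_of_ssubset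
            (Finset.erase_subset _ _) (Finset.erase_ssubset hv))]
          congr 1
          rw [Finset.card_erase_of_mem hu, Finset.card_erase_of_mem hv]
          omega
        rw [Finset.sum_congr rfl hsum, Finset.sum_const, Finset.card_erase_of_mem hv, hm, hrec m]
        have hc : m + 2 - 1 = m + 1 := rfl
        rw [hc, nsmul_eq_mul]
        push_cast
        ring

/-- on the complete graph with `N` vertices, uniform dimer activity
`w/N` and monomer activities `x_i > 0`,
`Z_N = √(N/(2πw)) ∫ exp(−Nξ²/(2w)) Π_i (ξ + x_i) dξ`. -/
theorem mean_field_gaussian_integral_representation (N : ℕ) (hN : 0 < N)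
    (w : ℝ) (hw : 0 < w) (x : Fin N → ℝ) (hx : ∀ i, 0 < x i) :
    partFun (completeEdges (Fin N)) (fun _ => w / N) x
      = Real.sqrt (N / (2 * Real.pi * w)) *
          ∫ ξ : ℝ, Real.exp (-(N * ξ ^ 2) / (2 * w)) * ∏ i, (ξ + x i) := by
  have hNpos : (0 : ℝ) < N := by exact_mod_cast hN
  set b : ℝ := N / (2 * w) with hb_def
  have hb : 0 < b := by positivity
  have hc : w / (N : ℝ) = 1 / (2 * b) := by
    rw [hb_def]; field_simp
  -- the combinatorial identity
  have hmomrec : ∀ k : ℕ, nmom b (k + 2) = (w / (N : ℝ)) * ((k : ℝ) + 1) * nmom b k := by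
    intro k
    rw [nmom_rec hb k, hc]
  have hcomb : ∀ T : Finset (Fin N),
      ∑ D ∈ exactCover T, (w / (N : ℝ)) ^ D.card = nmom b T.card :=
    exactCover_sum_eq _ _ (nmom_zero hb) (nmom_one b) hmomrec
  -- LHS grouped by the uncovered set
  have hL : partFun (completeEdges (Fin N)) (fun _ => w / N) x
      = ∑ S ∈ (Finset.univ : Finset (Fin N)).powerset,
          (∑ D ∈ exactCover (Finset.univ \ S), (w / (N : ℝ)) ^ D.card) * ∏ i ∈ S, x i := by
    rw [partFun, ← Finset.sum_fiberwise_of_maps_to (g := uncovered)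
      (fun D _ => Finset.mem_powerset.mpr (Finset.filter_subset _ _))]
    refine Finset.sum_congr rfl fun S hS => ?_
    rw [exactCover, Finset.sdiff_sdiff_eq_self (Finset.mem_powerset.mp hS), Finset.sum_mul]
    refine Finset.sum_congr rfl fun D hD => ?_
    have hunc : uncovered D = S := by
      have := (Finset.mem_filter.mp hD).2
      exact this
    rw [Finset.prod_const, hunc]
  -- the integral, expanded
  have hexp : ∀ ξ : ℝ, Real.exp (-((N : ℝ) * ξ ^ 2) / (2 * w)) = Real.exp (-b * ξ ^ 2) := by
    intro ξ; congr 1; rw [hb_def]; ring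
  have hprod : ∀ ξ : ℝ, (∏ i, (ξ + x i)) = ∑ S ∈ (Finset.univ : Finset (Fin N)).powerset,
      ξ ^ S.card * ∏ i ∈ Finset.univ \ S, x i := by
    intro ξ
    rw [Finset.prod_add (fun _ => ξ) x Finset.univ]
    refine Finset.sum_congr rfl fun S _ => ?_
    rw [Finset.prod_const]
  have hint : (∫ ξ : ℝ, Real.exp (-((N : ℝ) * ξ ^ 2) / (2 * w)) * ∏ i, (ξ + x i))
      = ∑ S ∈ (Finset.univ : Finset (Fin N)).powerset,
          (∏ i ∈ Finset.univ \ S, x i) * gmom b S.card := by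
    have hptw : ∀ ξ : ℝ, Real.exp (-((N : ℝ) * ξ ^ 2) / (2 * w)) * ∏ i, (ξ + x i)
        = ∑ S ∈ (Finset.univ : Finset (Fin N)).powerset,
            (∏ i ∈ Finset.univ \ S, x i) * (ξ ^ S.card * Real.exp (-b * ξ ^ 2)) := by
      intro ξ
      rw [hexp ξ, hprod ξ, Finset.mul_sum]
      refine Finset.sum_congr rfl fun S _ => ?_
      ring
    simp_rw [hptw]
    rw [MeasureTheory.integral_finset_sum]
    · refine Finset.sum_congr rfl fun S _ => ?_
      rw [MeasureTheory.integral_const_mul]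
      rfl
    · intro S _
      exact (integrable_pow_gauss hb S.card).const_mul _
  have hpre : Real.sqrt ((N : ℝ) / (2 * Real.pi * w)) = Real.sqrt (b / Real.pi) := by
    congr 1
    rw [hb_def, div_div]
    congr 1
    ring
  rw [hL, hint, hpre, Finset.mul_sum]
  refine Finset.sum_nbij' (i := fun S => Finset.univ \ S) (j := fun S => Finset.univ \ S)
    ?_ ?_ ?_ ?_ ?_
  · intro S _; exact Finset.mem_powerset.mpr (Finset.sdiff_subset)
  · intro S _; exact Finset.mem_powerset.mpr (Finset.sdiff_subset)
  · intro S hS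
    exact Finset.sdiff_sdiff_eq_self (Finset.mem_powerset.mp hS)
  · intro S hS
    exact Finset.sdiff_sdiff_eq_self (Finset.mem_powerset.mp hS)
  · intro S hS
    rw [hcomb, Finset.sdiff_sdiff_eq_self (Finset.mem_powerset.mp hS), nmom]
    ring
end
end

section
/- Gaussian convolution identity: let h ∈ ℝ, J > 0, and let M_N be the number of monomers under the mean-field imitative Gibbs measure μ_N on K_N (Hamiltonian −h Σα_i − (J/N) Σ_{i<j}[α_iα_j + (1−α_i)(1−α_j)], dimer weight 1/N). Let W ~ N(0, (2J)^{-1}) be independent of M_N. Then for any η ≥ 0 and u ∈ ℝ, the law of W/N^{1/2−η} + (M_N − Nu)/N^{1−η} has density proportional to exp(N·p̃_N(x/N^η + u)) with respect to Lebesgue measure, where p̃_N(x) = −Jx² + J/2 + p⁰_N(2Jx + h − J) and p⁰_N(t) = (1/N) log Z⁰_N(t) is the pressure of the pure model with monomer field t. -/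
open scoped BigOperators
open MeasureTheory Filter Finset

attribute [local instance] Classical.propDecidable

noncomputable section

variable {V : Type*} [Fintype V] [DecidableEq V]

open ProbabilityTheory

/-- Gibbs weight of a matching `D` of the complete graph on `N` vertices for the
mean-field imitative model: `N^{-|D|} exp(h M + (J/N)(C(M,2) + C(N−M,2)))`
where `M = N − 2|D|` is the number of monomers. -/
def gibbsWeight (N : ℕ) (h J : ℝ) (D : Finset (Sym2 (Fin N))) : ℝ :=
  ((1 : ℝ) / N) ^ D.card *
    Real.exp (h * ((N : ℝ) - 2 * D.card) +
      J / N * ((((N : ℝ) - 2 * D.card) * (((N : ℝ) - 2 * D.card) - 1) +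
        (2 * (D.card : ℝ)) * (2 * (D.card : ℝ) - 1)) / 2))

/-- The partition function of the mean-field imitative monomer-dimer model. -/
def gibbsZ (N : ℕ) (h J : ℝ) : ℝ :=
  ∑ D ∈ matchingsIn (completeEdges (Fin N)), gibbsWeight N h J D

/-- The law of the number of monomers `M_N` under the Gibbs measure. -/
def monomerLaw (N : ℕ) (h J : ℝ) : Measure ℝ :=
  (ENNReal.ofReal (gibbsZ N h J))⁻¹ •
    ∑ D ∈ matchingsIn (completeEdges (Fin N)),
      ENNReal.ofReal (gibbsWeight N h J D) • Measure.dirac ((N : ℝ) - 2 * D.card)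

/-- The pure (`J = 0`) mean-field partition function with monomer field `t`. -/
def Z0N (N : ℕ) (t : ℝ) : ℝ :=
  ∑ D ∈ matchingsIn (completeEdges (Fin N)),
    ((1 : ℝ) / N) ^ D.card * Real.exp (t * ((N : ℝ) - 2 * D.card))

/-- The pure pressure density `p⁰_N(t) = (1/N) log Z⁰_N(t)`. -/
def p0N (N : ℕ) (t : ℝ) : ℝ := (1 / (N : ℝ)) * Real.log (Z0N N t)

/-- `p̃_N(x) = −Jx² + J/2 + p⁰_N(2Jx + h − J)`. -/
def ptildeN (N : ℕ) (h J x : ℝ) : ℝ :=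
  -J * x ^ 2 + J / 2 + p0N N (2 * J * x + h - J)

/- ===== auxiliary lemmas ===== -/

open scoped ENNReal NNReal

section AuxMeasure

variable {α β : Type*} [MeasurableSpace α] [MeasurableSpace β]

lemma aux_isFiniteMeasure_smul (c : ℝ≥0∞) (hc : c ≠ ⊤) (ρ : Measure β)
    [IsFiniteMeasure ρ] : IsFiniteMeasure (c • ρ) := by
  constructor
  rw [Measure.smul_apply, smul_eq_mul]
  exact ENNReal.mul_lt_top hc.lt_top (measure_lt_top ρ _)

lemma aux_prod_smul_right (ν : Measure α) (c : ℝ≥0∞) (hc : c ≠ ⊤)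
    (ρ : Measure β) (hρ : IsFiniteMeasure ρ) : ν.prod (c • ρ) = c • ν.prod ρ := by
  haveI := hρ
  haveI := aux_isFiniteMeasure_smul c hc ρ
  ext s hs
  rw [Measure.prod_apply hs, Measure.smul_apply, Measure.prod_apply hs, smul_eq_mul,
    ← lintegral_const_mul' c _ hc]
  simp_rw [Measure.smul_apply, smul_eq_mul]

lemma aux_prod_finset_sum {ι : Type*} (ν : Measure α) (s : Finset ι)
    (ρ : ι → Measure β) (hρ : ∀ i, IsFiniteMeasure (ρ i)) :
    ν.prod (∑ i ∈ s, ρ i) = ∑ i ∈ s, ν.prod (ρ i) := by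
  haveI := hρ
  rw [← Measure.sum_coe_finset, Measure.prod_sum_right]
  exact Measure.sum_coe_finset s (fun i => ν.prod (ρ i))

lemma aux_map_finset_sum {ι : Type*} {f : α → β} (hf : Measurable f) (s : Finset ι)
    (ρ : ι → Measure α) : (∑ i ∈ s, ρ i).map f = ∑ i ∈ s, (ρ i).map f := by
  rw [← Measure.sum_coe_finset, Measure.map_sum hf.aemeasurable]
  exact Measure.sum_coe_finset s (fun i => (ρ i).map f)

lemma aux_withDensity_finset_sum {ι : Type*} (μ : Measure α) (s : Finset ι)
    (f : ι → α → ℝ≥0∞) (hf : ∀ i, Measurable (f i)) :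
    μ.withDensity (fun x => ∑ i ∈ s, f i x) = ∑ i ∈ s, μ.withDensity (f i) := by
  classical
  induction s using Finset.induction with
  | empty => simp
  | @insert a s hnot ih =>
      rw [show (fun x => ∑ i ∈ insert a s, f i x)
            = f a + fun x => ∑ i ∈ s, f i x from
          funext fun x => Finset.sum_insert hnot,
        withDensity_add_left (hf a), ih, Finset.sum_insert hnot]

end AuxMeasure

lemma aux_empty_mem_matchingsIn {V : Type*} [Fintype V] [DecidableEq V]
    (E : Finset (Sym2 V)) : ∅ ∈ matchingsIn E := by
  simp [matchingsIn, IsMatchingIn]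

lemma gibbsZ_pos (N : ℕ) (hN : 0 < N) (h J : ℝ) : 0 < gibbsZ N h J := by
  refine Finset.sum_pos (fun D _ => ?_) ⟨∅, aux_empty_mem_matchingsIn _⟩
  have hN' : (0:ℝ) < N := by exact_mod_cast hN
  unfold gibbsWeight
  positivity

lemma Z0N_pos (N : ℕ) (hN : 0 < N) (t : ℝ) : 0 < Z0N N t := by
  refine Finset.sum_pos (fun D _ => ?_) ⟨∅, aux_empty_mem_matchingsIn _⟩
  have hN' : (0:ℝ) < N := by exact_mod_cast hN
  positivity


set_option maxHeartbeats 2000000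

/-- Gaussian convolution identity: if `W ~ N(0,(2J)⁻¹)` is
independent of the number of monomers `M_N`, then the law of
`W/N^{1/2−η} + (M_N − Nu)/N^{1−η}` has density proportional to
`exp(N p̃_N(x/N^η + u))` with respect to Lebesgue measure. -/
theorem gaussian_convolution_identity {Ω : Type*} [MeasurableSpace Ω]
    (μ : Measure Ω) [IsProbabilityMeasure μ] (N : ℕ) (hN : 0 < N)
    (h J : ℝ) (hJ : 0 < J) (MN W : Ω → ℝ) (hMN : Measurable MN)
    (hWm : Measurable W) (hindep : IndepFun W MN μ)
    (hlawM : μ.map MN = monomerLaw N h J)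
    (hlawW : μ.map W = gaussianReal 0 (Real.toNNReal (2 * J)⁻¹))
    (η u : ℝ) (hη : 0 ≤ η) :
    ∃ c : ℝ, 0 < c ∧
      μ.map (fun ω => W ω / (N : ℝ) ^ ((1 : ℝ) / 2 - η)
          + (MN ω - N * u) / (N : ℝ) ^ ((1 : ℝ) - η))
        = volume.withDensity
            (fun x => ENNReal.ofReal
              (c * Real.exp (N * ptildeN N h J (x / (N : ℝ) ^ η + u)))) := by
  classical
  have hNR : (0:ℝ) < N := by exact_mod_cast hN
  set v : ℝ≥0 := Real.toNNReal (2 * J)⁻¹ with hv_def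
  set A : ℝ := (N : ℝ) ^ ((1:ℝ)/2 - η) with hA_def
  set B : ℝ := (N : ℝ) ^ ((1:ℝ) - η) with hB_def
  set P : ℝ := (N : ℝ) ^ η with hP_def
  have hA : 0 < A := Real.rpow_pos_of_pos hNR _
  have hB : 0 < B := Real.rpow_pos_of_pos hNR _
  have hP : 0 < P := Real.rpow_pos_of_pos hNR _
  have hpow : ∀ a b : ℝ, (N:ℝ) ^ a * (N:ℝ) ^ b = (N:ℝ) ^ (a + b) := fun a b =>
    (Real.rpow_add hNR a b).symm
  have hsq : ∀ a : ℝ, ((N:ℝ) ^ a) ^ (2:ℕ) = (N:ℝ) ^ (a * 2) := fun a => by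
    rw [← Real.rpow_natCast ((N:ℝ) ^ a) 2, ← Real.rpow_mul hNR.le]
    norm_num
  have hA2P : A ^ 2 * P ^ 2 = (N:ℝ) := by
    rw [hA_def, hP_def, hsq, hsq, hpow,
      show ((1:ℝ)/2 - η) * 2 + η * 2 = 1 by ring, Real.rpow_one]
  have hBP : B * P = (N:ℝ) := by
    rw [hB_def, hP_def, hpow, show (1:ℝ) - η + η = 1 by ring, Real.rpow_one]
  have hA2 : A ^ 2 = (N:ℝ) / P ^ 2 := by
    rw [eq_div_iff (by positivity)]; exact hA2P
  have hB' : B = (N:ℝ) / P := by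
    rw [eq_div_iff hP.ne']; exact hBP
  set v' : ℝ≥0 := ⟨(A⁻¹)^2, sq_nonneg _⟩ * v with hv'_def
  have hvR : (v : ℝ) = (2*J)⁻¹ := Real.coe_toNNReal _ (by positivity)
  have hv'R : (v' : ℝ) = P^2 / ((N:ℝ) * (2*J)) := by
    rw [hv'_def]; change (A⁻¹)^2 * (v:ℝ) = _; rw [hvR, inv_pow, hA2]
    field_simp
  have hv'pos : (0:ℝ) < (v' : ℝ) := by rw [hv'R]; positivity
  have hv' : v' ≠ 0 := fun h0 => by simp [h0] at hv'pos
  have hz : 0 < gibbsZ N h J := gibbsZ_pos N hN h J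
  set e : ℝ≥0∞ := (ENNReal.ofReal (gibbsZ N h J))⁻¹ with he_def
  have he_top : e ≠ ⊤ := ENNReal.inv_ne_top.mpr (ENNReal.ofReal_pos.mpr hz).ne'
  set g : ℝ × ℝ → ℝ := fun p => p.1 / A + (p.2 - (N:ℝ) * u) / B with hg_def
  have hg : Measurable g := (measurable_fst.div_const A).add
    ((measurable_snd.sub_const _).div_const B)
  set K : ℝ := (Real.sqrt (2 * Real.pi * (v':ℝ)))⁻¹ with hK_def
  have hπ := Real.pi_pos
  have hK : 0 < K := by rw [hK_def]; positivity
  set c : ℝ := K * Real.exp (-(J/2)) / gibbsZ N h J with hc_def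
  have hc : 0 < c := div_pos (mul_pos hK (Real.exp_pos _)) hz
  refine ⟨c, hc, ?_⟩
  have hmapD : ∀ m0 : ℝ, (gaussianReal 0 v).map (fun x => x / A + m0)
      = gaussianReal m0 v' := by
    intro m0
    have hfun : (fun x : ℝ => x / A + m0) = (fun x => x + m0) ∘ (fun x => x * A⁻¹) := by
      funext x; simp [div_eq_mul_inv]
    rw [hfun, ← Measure.map_map (measurable_add_const m0) (measurable_mul_const A⁻¹),
      gaussianReal_map_mul_const, gaussianReal_map_add_const, hv'_def]
    norm_num
    rfl
  haveI hsf : SFinite (gaussianReal 0 v) := inferInstance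
  have hdirac : ∀ r : ℝ, IsFiniteMeasure (Measure.dirac r) := fun r => inferInstance
  have hfm : ∀ D : Finset (Sym2 (Fin N)),
      IsFiniteMeasure (ENNReal.ofReal (gibbsWeight N h J D)
        • Measure.dirac ((N:ℝ) - 2 * D.card)) := fun D =>
    aux_isFiniteMeasure_smul _ ENNReal.ofReal_ne_top _
  have hfmsum : IsFiniteMeasure (∑ D ∈ matchingsIn (completeEdges (Fin N)),
      ENNReal.ofReal (gibbsWeight N h J D) • Measure.dirac ((N:ℝ) - 2 * D.card)) := by
    constructor
    rw [Measure.finset_sum_apply]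
    exact ENNReal.sum_lt_top.mpr fun D _ => (hfm D).measure_univ_lt_top
  have claimA : μ.map (fun ω => W ω / A + (MN ω - (N:ℝ) * u) / B)
      = e • ∑ D ∈ matchingsIn (completeEdges (Fin N)),
          ENNReal.ofReal (gibbsWeight N h J D)
            • gaussianReal (((N:ℝ) - 2 * D.card - (N:ℝ) * u) / B) v' := by
    have hpair : μ.map (fun ω => (W ω, MN ω))
        = (gaussianReal 0 v).prod (monomerLaw N h J) := by
      rw [← hlawW, ← hlawM]
      exact (ProbabilityTheory.indepFun_iff_map_prod_eq_prod_map_map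
        hWm.aemeasurable hMN.aemeasurable).mp hindep
    have hcomp : (fun ω => W ω / A + (MN ω - (N:ℝ) * u) / B)
        = g ∘ (fun ω => (W ω, MN ω)) := rfl
    rw [hcomp, ← Measure.map_map hg (hWm.prodMk hMN), hpair]
    unfold monomerLaw
    rw [aux_prod_smul_right _ _ he_top _ hfmsum, Measure.map_smul,
      aux_prod_finset_sum _ _ _ hfm, aux_map_finset_sum hg]
    congr 1
    refine Finset.sum_congr rfl fun D _ => ?_
    rw [aux_prod_smul_right _ _ ENNReal.ofReal_ne_top
        (Measure.dirac ((N:ℝ) - 2 * D.card)) (hdirac _), Measure.prod_dirac,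
      Measure.map_smul, Measure.map_map hg measurable_prodMk_right]
    congr 1
    have hcomp2 : g ∘ (fun x : ℝ => (x, (N:ℝ) - 2 * D.card))
        = fun x => x / A + ((N:ℝ) - 2 * D.card - (N:ℝ) * u) / B := rfl
    rw [hcomp2, hmapD]
  rw [claimA]
  calc e • ∑ D ∈ matchingsIn (completeEdges (Fin N)),
        ENNReal.ofReal (gibbsWeight N h J D)
          • gaussianReal (((N:ℝ) - 2 * D.card - (N:ℝ) * u) / B) v'
      = e • ∑ D ∈ matchingsIn (completeEdges (Fin N)),
          volume.withDensity (fun x => ENNReal.ofReal (gibbsWeight N h J D)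
            * gaussianPDF (((N:ℝ) - 2 * D.card - (N:ℝ) * u) / B) v' x) := by
        refine congrArg (e • ·) (Finset.sum_congr rfl fun D _ => ?_)
        rw [gaussianReal_of_var_ne_zero _ hv',
          ← withDensity_smul _ (measurable_gaussianPDF _ _)]
        rfl
    _ = e • volume.withDensity (fun x => ∑ D ∈ matchingsIn (completeEdges (Fin N)),
          ENNReal.ofReal (gibbsWeight N h J D)
            * gaussianPDF (((N:ℝ) - 2 * D.card - (N:ℝ) * u) / B) v' x) := by
        rw [aux_withDensity_finset_sum _ _ _
          (fun D => (measurable_gaussianPDF _ _).const_mul _)]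
    _ = volume.withDensity (fun x => e * ∑ D ∈ matchingsIn (completeEdges (Fin N)),
          ENNReal.ofReal (gibbsWeight N h J D)
            * gaussianPDF (((N:ℝ) - 2 * D.card - (N:ℝ) * u) / B) v' x) := by
        rw [← withDensity_smul' e _ he_top]; rfl
    _ = volume.withDensity (fun x => ENNReal.ofReal
          (c * Real.exp (N * ptildeN N h J (x / P + u)))) := by
        congr 1
        funext x
        have hw : ∀ D, (0:ℝ) ≤ gibbsWeight N h J D := by
          intro D
          unfold gibbsWeight
          positivity
        have hterm : ∀ D ∈ matchingsIn (completeEdges (Fin N)),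
            ENNReal.ofReal (gibbsWeight N h J D)
              * gaussianPDF (((N:ℝ) - 2 * D.card - (N:ℝ) * u) / B) v' x
            = ENNReal.ofReal (gibbsWeight N h J D
              * gaussianPDFReal (((N:ℝ) - 2 * D.card - (N:ℝ) * u) / B) v' x) := by
          intro D _
          rw [gaussianPDF, ← ENNReal.ofReal_mul (hw D)]
        rw [Finset.sum_congr rfl hterm,
          ← ENNReal.ofReal_sum_of_nonneg
            (fun D _ => mul_nonneg (hw D) (gaussianPDFReal_nonneg _ _ _)),
          he_def, ← ENNReal.ofReal_inv_of_pos hz,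
          ← ENNReal.ofReal_mul (inv_nonneg.mpr hz.le)]
        congr 1
        -- now a purely real identity
        have hZ0 := Z0N_pos N hN (2*J*(x/P + u) + h - J)
        have hlog : (N:ℝ) * ptildeN N h J (x/P + u)
            = (N:ℝ) * (-J * (x/P + u)^2 + J/2)
              + Real.log (Z0N N (2*J*(x/P + u) + h - J)) := by
          unfold ptildeN p0N
          field_simp
        rw [hlog, Real.exp_add, Real.exp_log hZ0]
        unfold Z0N
        rw [Finset.mul_sum, Finset.mul_sum, Finset.mul_sum]
        refine Finset.sum_congr rfl fun D _ => ?_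
        unfold gibbsWeight gaussianPDFReal
        rw [hc_def]
        have hEXP : Real.exp (h * ((N:ℝ) - 2 * D.card) +
              J / N * ((((N : ℝ) - 2 * D.card) * (((N : ℝ) - 2 * D.card) - 1) +
                (2 * (D.card : ℝ)) * (2 * (D.card : ℝ) - 1)) / 2))
            * Real.exp (-(x - ((N:ℝ) - 2 * D.card - (N:ℝ) * u) / B)^2 / (2 * (v':ℝ)))
            = Real.exp (-(J/2)) * (Real.exp ((N:ℝ) * (-J * (x/P + u)^2 + J/2))
              * Real.exp ((2*J*(x/P + u) + h - J) * ((N:ℝ) - 2 * D.card))) := by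
          rw [← Real.exp_add, ← Real.exp_add, ← Real.exp_add]
          congr 1
          rw [hv'R, hB']
          field_simp
          ring
        linear_combination ((gibbsZ N h J)⁻¹ * (1/(N:ℝ))^D.card * K) * hEXP
end
end
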